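/- arXiv:1406.7833 — 2 statements merged into one kernel-verified Lean document; each statement's English description precedes it below -/
import Mathlib

section
/- Let γ : [0,1] → ℝ² be C¹ at uniform ℓ¹-speed L, with modulus of continuity δ_k of γ̇ at scale 1/k. Fix k and suppose u = (u_1,…,u_{k-1}) ∈ Δ_{k-1} (so 0 < u_1 < ⋯ < u_{k-1} < 1, with u_0 = 0, u_k = 1) satisfies |u_j - j/k| > √(δ_k/L) + √(1/k) for some j. Then ∏_{i=1}^{k} (|Δ_{u_i} γ| / |Δ_i γ|) < (1 - δ_k/L - 1/k)^k < 1/e, where |Δ_{u_i} γ| is the ℓ¹ increment of γ over [u_{i-1}, u_i] and |Δ_i γ| the ℓ¹ increment over [(i-1)/k, i/k]. -/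
open Set

section helpers
open MeasureTheory intervalIntegral

lemma quad_le_exp {z : ℝ} (hz : 0 ≤ z) : 1 + z + z^2/2 ≤ Real.exp z := by
  have h := Real.sum_le_exp_of_nonneg hz 3
  have hs : ∑ i ∈ Finset.range 3, z ^ i / (Nat.factorial i) = 1 + z + z^2/2 := by
    norm_num [Finset.sum_range_succ, Nat.factorial]
  linarith [hs ▸ h]

lemma exp_le_cubic {z : ℝ} (hz : 0 ≤ z) (hz1 : z ≤ 1) :
    Real.exp z ≤ 1 + z + z^2/2 + 2/9 * z^3 := by
  have h := Real.exp_bound (x := z) (by rw [abs_of_nonneg hz]; exact hz1) (n := 3) (by norm_num)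
  have hs : ∑ i ∈ Finset.range 3, z ^ i / (Nat.factorial i) = 1 + z + z^2/2 := by
    norm_num [Finset.sum_range_succ, Nat.factorial]
  rw [hs, abs_of_nonneg hz] at h
  have h2 := (abs_le.1 h).2
  norm_num [Nat.factorial] at h2
  nlinarith [h2, pow_nonneg hz 3]

lemma log_le_half_sub {t : ℝ} (ht : 1 ≤ t) : Real.log t ≤ (t^2 - 1)/(2*t) := by
  have ht0 : 0 < t := lt_of_lt_of_le one_pos ht
  set z : ℝ := (t^2 - 1)/(2*t) with hzdef
  have hz0 : 0 ≤ z := by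
    apply div_nonneg _ (by linarith)
    nlinarith
  have key : 1 + z + z^2/2 - t = (t-1)^4/(8*t^2) := by
    rw [hzdef]; field_simp; ring
  have h1 : t ≤ 1 + z + z^2/2 := by
    nlinarith [key, div_nonneg (pow_nonneg (by linarith : (0:ℝ) ≤ t-1) 4)
      (by positivity : (0:ℝ) ≤ 8*t^2)]
  calc Real.log t ≤ Real.log (1 + z + z^2/2) := Real.log_le_log ht0 h1
    _ ≤ Real.log (Real.exp z) := Real.log_le_log (by positivity) (quad_le_exp hz0)
    _ = z := Real.log_exp z

lemma slope_nonneg {d : ℝ} (hd0 : 0 ≤ d) (hd1 : d < 1) :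
    0 ≤ d + d/(1-d) + 2 * Real.log (1-d) := by
  have h1d : (0:ℝ) < 1 - d := by linarith
  have ht : 1 ≤ (1-d)⁻¹ := (one_le_inv_iff₀.2 ⟨h1d, by linarith⟩)
  have h := log_le_half_sub ht
  rw [Real.log_inv] at h
  have heq : (((1-d)⁻¹)^2 - 1)/(2*(1-d)⁻¹) = (d*(2-d))/(2*(1-d)) := by
    rw [div_eq_div_iff (by positivity) (by positivity)]
    field_simp
    ring
  rw [heq] at h
  have h4 : d + d/(1-d) = d*(2-d)/(2*(1-d)) * 2 := by field_simp; ring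
  linarith

lemma obligation_O {ε : ℝ} (h0 : 0 ≤ ε) (h1 : ε < 1) :
    ε * (1-ε) ≤ Real.log ((1+ε)*(1-ε^2/2)) := by
  set z : ℝ := ε * (1-ε) with hz
  have hz0 : 0 ≤ z := mul_nonneg h0 (by linarith)
  have hz1 : z ≤ 1 := by nlinarith
  have hze : z = ε - ε^2 := by rw [hz]; ring
  have e1 : z ≤ (3/2)*ε := by nlinarith
  have e15 : z^2 ≤ (9/4)*ε^2 := by nlinarith [e1, hz0]
  have e2 : 2/9 * z^3 ≤ z * ε^2/2 := by nlinarith [mul_le_mul_of_nonneg_left e15 hz0]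
  have key : z^2/2 + 2/9 * z^3 ≤ z * ε / 2 := by nlinarith [e2]
  have heq : (1+ε)*(1-ε^2/2) = 1 + z + z * ε/2 := by rw [hz]; ring
  have hexp : Real.exp z ≤ (1+ε)*(1-ε^2/2) := by
    have h := exp_le_cubic hz0 hz1
    linarith
  calc z = Real.log (Real.exp z) := (Real.log_exp z).symm
    _ ≤ Real.log ((1+ε)*(1-ε^2/2)) := Real.log_le_log (Real.exp_pos z) hexp

/-- main tangent chain: KL(α‖α+d) ≥ -log(1-d) - d(1-d) -/
lemma kl_ge {α d : ℝ} (hα : 0 < α) (h1 : α + d < 1) (hd : 0 < d) :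
    -Real.log (1-d) - d*(1-d) ≤
      α * Real.log (α/(α+d)) + (1-α) * Real.log ((1-α)/(1-α-d)) := by
  have hd1 : d < 1 := by linarith
  have h1d : (0:ℝ) < 1 - d := by linarith
  have hw : (0:ℝ) < 1 - α := by linarith
  have hwd : (0:ℝ) < 1 - α - d := by linarith
  have had : (0:ℝ) < α + d := by linarith
  -- T1 : (1-α) log((1-α)/(1-α-d)) ≥ (1-α) - (1-α-d)/(1-d) - (1-α) log (1-d)
  have T1 : (1-α) - (1-α-d)/(1-d) - (1-α) * Real.log (1-d)
      ≤ (1-α) * Real.log ((1-α)/(1-α-d)) := by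
    have hx : (0:ℝ) < (1-α)*(1-d)/(1-α-d) := by positivity
    have hlog := Real.one_sub_inv_le_log_of_pos hx
    have hinv : ((1-α)*(1-d)/(1-α-d))⁻¹ = (1-α-d)/((1-α)*(1-d)) := by
      rw [inv_div]
    rw [hinv] at hlog
    have hsplit : Real.log ((1-α)*(1-d)/(1-α-d))
        = Real.log ((1-α)/(1-α-d)) + Real.log (1-d) := by
      rw [show (1-α)*(1-d)/(1-α-d) = ((1-α)/(1-α-d))*(1-d) by ring,
        Real.log_mul (by positivity) (by positivity)]
    rw [hsplit] at hlog
    -- hlog : 1 - (1-α-d)/((1-α)*(1-d)) ≤ log((1-α)/(1-α-d)) + log(1-d)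
    have hmul := mul_le_mul_of_nonneg_left hlog hw.le
    have hexp : (1-α) * (1 - (1-α-d)/((1-α)*(1-d))) = (1-α) - (1-α-d)/(1-d) := by
      field_simp
    nlinarith [hmul, hexp]
  -- T2 : α log((α+d)/α) ≤ d(1-d) - α d - α log(1-d)
  have T2 : α * Real.log ((α+d)/α) ≤ d*(1-d) - α*d - α * Real.log (1-d) := by
    have hT : (0:ℝ) < (α+d)*(1-d)/α := by positivity
    have hlog := Real.log_le_sub_one_of_pos hT
    have hsplit : Real.log ((α+d)*(1-d)/α)
        = Real.log ((α+d)/α) + Real.log (1-d) := by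
      rw [show (α+d)*(1-d)/α = ((α+d)/α)*(1-d) by ring,
        Real.log_mul (by positivity) (by positivity)]
    rw [hsplit] at hlog
    have hmul := mul_le_mul_of_nonneg_left hlog hα.le
    have hexp : α * ((α+d)*(1-d)/α - 1) = d*(1-d) - α*d := by
      field_simp
      ring
    nlinarith [hmul, hexp]
  have hflip : α * Real.log (α/(α+d)) = - (α * Real.log ((α+d)/α)) := by
    rw [show α/(α+d) = ((α+d)/α)⁻¹ by rw [inv_div], Real.log_inv]
    ring
  have hslope := slope_nonneg hd.le hd1
  have hαslope : 0 ≤ α * (d + d/(1-d) + 2 * Real.log (1-d)) :=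
    mul_nonneg hα.le hslope
  -- combine
  have halg : (1-α) - (1-α-d)/(1-d) - (1-α) * Real.log (1-d)
      - (d*(1-d) - α*d - α * Real.log (1-d))
      = -Real.log (1-d) - d*(1-d) + α * (d + d/(1-d) + 2 * Real.log (1-d)) := by
    field_simp
    ring
  rw [hflip]
  linarith [T1, T2, halg, hαslope]

/-- strict monotonicity of φ(t) = -log(1-t) - t(1-t) -/
lemma phi_mono {e d : ℝ} (he : 0 ≤ e) (hed : e < d) (hd1 : d < 1) :
    -Real.log (1-e) - e*(1-e) < -Real.log (1-d) - d*(1-d) := by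
  have h1e : (0:ℝ) < 1 - e := by linarith
  have h1d : (0:ℝ) < 1 - d := by linarith
  have hx : (0:ℝ) < (1-e)/(1-d) := by positivity
  have hlog := Real.one_sub_inv_le_log_of_pos hx
  have hinv : ((1-e)/(1-d))⁻¹ = (1-d)/(1-e) := by rw [inv_div]
  rw [hinv, Real.log_div (by positivity) (by positivity)] at hlog
  -- hlog : 1 - (1-d)/(1-e) ≤ log(1-e) - log(1-d)
  have key : 1 - (1-d)/(1-e) - (d-e) = (d-e)*e/(1-e) := by field_simp; ring
  have h2 : d - e ≤ 1 - (1-d)/(1-e) := by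
    nlinarith [key, div_nonneg (mul_nonneg (by linarith : (0:ℝ) ≤ d - e) he) h1e.le]
  nlinarith [hlog, h2, mul_pos (sub_pos.2 hed) (by linarith : (0:ℝ) < d + e)]

/-- the full scalar KL bound -/
lemma kl_main {α v p q : ℝ} (hα0 : 0 < α) (hα1 : α < 1) (hv0 : 0 < v) (hv1 : v < 1)
    (hp : 0 ≤ p) (hq : 0 < q) (hpq : p + q < 1)
    (hdev : Real.sqrt p + Real.sqrt q < |v - α|) :
    -Real.log ((1-p-q)*(1-p/2)) <
      α * Real.log (α/v) + (1-α) * Real.log ((1-α)/(1-v)) := by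
  obtain ⟨e, he0, hesq, hpe, hdev⟩ : ∃ e : ℝ, 0 ≤ e ∧ p + q ≤ e^2 ∧ p ≤ e^2 ∧ e < |v - α| := by
    refine ⟨Real.sqrt p + Real.sqrt q, by positivity, ?_, ?_, hdev⟩
    · have hp2 := Real.sq_sqrt hp
      have hq2 := Real.sq_sqrt hq.le
      nlinarith [mul_nonneg (Real.sqrt_nonneg p) (Real.sqrt_nonneg q)]
    · have hp2 := Real.sq_sqrt hp
      have hq2 := Real.sq_sqrt hq.le
      nlinarith [Real.sqrt_nonneg q, Real.sqrt_nonneg p]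
  -- a middle bound lemma: φ(e) ≥ -log((1-p-q)(1-p/2)), given e < 1
  have middle : ∀ e' : ℝ, 0 ≤ e' → e' < 1 → p + q ≤ e'^2 → p ≤ e'^2 →
      -Real.log ((1-p-q)*(1-p/2)) ≤ -Real.log (1-e') - e'*(1-e') := by
    intro e' h0 h1 hs1 hs2
    have h1e : (0:ℝ) < 1 - e' := by linarith
    have hO := obligation_O h0 h1
    have hfac : (1-e')*((1+e')*(1-e'^2/2)) = (1-e'^2)*(1-e'^2/2) := by ring
    have hpos1 : (0:ℝ) < 1 - e'^2 := by nlinarith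
    have hpos2 : (0:ℝ) < 1 - e'^2/2 := by nlinarith
    have hpos3 : (0:ℝ) < 1 - p - q := by linarith
    have hpos4 : (0:ℝ) < 1 - p/2 := by linarith
    have hmono : Real.log ((1-e'^2)*(1-e'^2/2)) ≤ Real.log ((1-p-q)*(1-p/2)) := by
      apply Real.log_le_log (by positivity)
      apply mul_le_mul (by linarith) (by linarith) (by linarith) (by linarith)
    have hsplit : Real.log ((1-e'^2)*(1-e'^2/2))
        = Real.log (1-e') + Real.log ((1+e')*(1-e'^2/2)) := by
      rw [← hfac, Real.log_mul (by positivity) (by positivity)]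
    linarith
  rcases abs_cases (v - α) with ⟨habs, _⟩ | ⟨habs, _⟩
  · -- v - α > e : d := v - α
    rw [habs] at hdev
    have hed : e < v - α := hdev
    have hd1 : v - α < 1 := by linarith
    have he1 : e < 1 := lt_trans hed hd1
    have hkl := kl_ge hα0 (by linarith : α + (v - α) < 1) (by linarith : 0 < v - α)
    rw [show α + (v - α) = v by ring, show 1 - α - (v - α) = 1 - v by ring] at hkl
    have hφ := phi_mono he0 hed hd1
    have hm := middle e he0 he1 hesq hpe
    linarith
  · -- α - v > e
    rw [habs] at hdev
    have hed : e < α - v := by linarith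
    have hd1 : α - v < 1 := by linarith
    have he1 : e < 1 := lt_trans hed hd1
    have hkl := kl_ge (α := 1 - α) (d := α - v) (by linarith) (by linarith) (by linarith)
    rw [show (1-α) + (α - v) = 1 - v by ring, show 1 - (1-α) - (α - v) = v by ring,
      show 1 - (1-α) = α by ring] at hkl
    have hφ := phi_mono he0 hed hd1
    have hm := middle e he0 he1 hesq hpe
    linarith

/-- upper (Lipschitz) bound on increments -/
lemma lip {x y x' y' : ℝ → ℝ} {L : ℝ}
    (hx : ∀ t ∈ Icc (0:ℝ) 1, HasDerivAt x (x' t) t)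
    (hy : ∀ t ∈ Icc (0:ℝ) 1, HasDerivAt y (y' t) t)
    (hcx : ContinuousOn x' (Icc 0 1)) (hcy : ContinuousOn y' (Icc 0 1))
    (hspeed : ∀ t ∈ Icc (0:ℝ) 1, |x' t| + |y' t| = L)
    {s t : ℝ} (hs0 : 0 ≤ s) (hst : s ≤ t) (ht1 : t ≤ 1) :
    |x t - x s| + |y t - y s| ≤ L * (t - s) := by
  have hsub : Icc s t ⊆ Icc (0:ℝ) 1 := Icc_subset_Icc hs0 ht1
  have huicc : uIcc s t = Icc s t := uIcc_of_le hst
  have hsub' : uIcc s t ⊆ Icc (0:ℝ) 1 := by rw [huicc]; exact hsub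
  have hxi : IntervalIntegrable x' volume s t := (hcx.mono hsub').intervalIntegrable
  have hyi : IntervalIntegrable y' volume s t := (hcy.mono hsub').intervalIntegrable
  have hxe : ∫ r in s..t, x' r = x t - x s :=
    integral_eq_sub_of_hasDerivAt (fun r hr => hx r (hsub' hr)) hxi
  have hye : ∫ r in s..t, y' r = y t - y s :=
    integral_eq_sub_of_hasDerivAt (fun r hr => hy r (hsub' hr)) hyi
  have habs1 : |x t - x s| ≤ ∫ r in s..t, |x' r| := by
    rw [← hxe]; exact abs_integral_le_integral_abs hst
  have habs2 : |y t - y s| ≤ ∫ r in s..t, |y' r| := by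
    rw [← hye]; exact abs_integral_le_integral_abs hst
  have hsum : (∫ r in s..t, |x' r|) + (∫ r in s..t, |y' r|)
      = ∫ r in s..t, (|x' r| + |y' r|) := (integral_add hxi.abs hyi.abs).symm
  have hca : (∫ r in s..t, (|x' r| + |y' r|)) = ∫ r in s..t, (L:ℝ) :=
    integral_congr (fun r hr => hspeed r (hsub' hr))
  have hconst : (∫ r in s..t, (L:ℝ)) = (t - s) * L := by
    simp [intervalIntegral.integral_const, smul_eq_mul]
  linarith

/-- if a continuous function has no zero in the open interval and is positive somewhere
inside, it is nonnegative on the closed interval -/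
lemma nonneg_on {f : ℝ → ℝ} {a b m : ℝ} (hf : ContinuousOn f (Icc a b))
    (h0 : ∀ t ∈ Ioo a b, f t ≠ 0) (hm : m ∈ Ioo a b) (hfm : 0 < f m) :
    ∀ t ∈ Icc a b, 0 ≤ f t := by
  intro t ht
  by_contra hneg
  push_neg at hneg
  have hm' : m ∈ Icc a b := Ioo_subset_Icc_self hm
  have hcont : ContinuousOn f (uIcc m t) := hf.mono (uIcc_subset_Icc hm' ht)
  have hmem : (0:ℝ) ∈ uIcc (f m) (f t) := by
    rw [mem_uIcc]; right; exact ⟨hneg.le, hfm.le⟩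
  obtain ⟨r, hr, hr0⟩ := intermediate_value_uIcc hcont hmem
  have hrm : r ≠ m := fun h => by rw [h] at hr0; exact hfm.ne' hr0
  have hrt : r ≠ t := fun h => by rw [h] at hr0; exact hneg.ne hr0
  have hr1 : m ⊓ t ≤ r ∧ r ≤ m ⊔ t := ⟨hr.1, hr.2⟩
  have hra : a < r := by
    rcases le_total m t with h | h
    · have : m ⊓ t = m := inf_eq_left.2 h
      rw [this] at hr1; exact lt_of_lt_of_le hm.1 hr1.1
    · have : m ⊓ t = t := inf_eq_right.2 h
      rw [this] at hr1
      exact lt_of_le_of_lt ht.1 (lt_of_le_of_ne hr1.1 (Ne.symm hrt))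
  have hrb : r < b := by
    rcases le_total m t with h | h
    · have : m ⊔ t = t := sup_eq_right.2 h
      rw [this] at hr1
      exact lt_of_lt_of_le (lt_of_le_of_ne hr1.2 hrt) ht.2
    · have : m ⊔ t = m := sup_eq_left.2 h
      rw [this] at hr1; exact lt_of_le_of_lt hr1.2 hm.2
  exact h0 r ⟨hra, hrb⟩ hr0

lemma cellA {x y x' y' : ℝ → ℝ} {L δ : ℝ} (hδ0 : 0 ≤ δ) (hδL : δ < L)
    (hy : ∀ t ∈ Icc (0:ℝ) 1, HasDerivAt y (y' t) t)
    (hcx : ContinuousOn x' (Icc 0 1)) (hcy : ContinuousOn y' (Icc 0 1))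
    (hspeed : ∀ t ∈ Icc (0:ℝ) 1, |x' t| + |y' t| = L)
    {a b : ℝ} (ha : 0 ≤ a) (hab : a < b) (hb : b ≤ 1)
    (hmodw : ∀ s ∈ Icc a b, ∀ t ∈ Icc a b, |s - t| < b - a →
      |x' s - x' t| + |y' s - y' t| ≤ δ)
    (hX : ∃ t₀ ∈ Ioo a b, x' t₀ = 0) :
    (L - δ/2) * (b - a) ≤ |x b - x a| + |y b - y a| := by
  obtain ⟨t₀, ht₀, hx0⟩ := hX
  have hsub : Icc a b ⊆ Icc (0:ℝ) 1 := Icc_subset_Icc ha hb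
  have ht₀' : t₀ ∈ Icc a b := Ioo_subset_Icc_self ht₀
  have hdist : ∀ t ∈ Icc a b, |t - t₀| < b - a := by
    intro t ht
    rw [abs_sub_lt_iff]
    exact ⟨by linarith [ht.2, ht₀.1], by linarith [ht.1, ht₀.2]⟩
  have hyL : |y' t₀| = L := by
    have := hspeed t₀ (hsub ht₀')
    rw [hx0] at this; simpa using this
  have hlx : ∀ t ∈ Icc a b, |y' t| = L - |x' t| := by
    intro t ht; have := hspeed t (hsub ht); linarith
  have keyx : ∀ t ∈ Icc a b, |x' t| ≤ δ/2 := by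
    intro t ht
    have hm := hmodw t ht t₀ ht₀' (hdist t ht)
    rw [hx0, sub_zero] at hm
    have h1 : |(|y' t| - |y' t₀|)| ≤ |y' t - y' t₀| := abs_abs_sub_abs_le_abs_sub _ _
    have h2 : |(|y' t| - |y' t₀|)| = |x' t| := by
      rw [hlx t ht, hyL]
      rw [show L - |x' t| - L = -|x' t| by ring, abs_neg, abs_abs]
    linarith
  have hyne : ∀ t ∈ Icc a b, y' t ≠ 0 := by
    intro t ht h0'
    have := hlx t ht
    rw [h0', abs_zero] at this
    have := keyx t ht
    linarith
  have main : ∀ Y Y' : ℝ → ℝ, (∀ t ∈ Icc (0:ℝ) 1, HasDerivAt Y (Y' t) t) →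
      ContinuousOn Y' (Icc 0 1) → (∀ t ∈ Icc a b, Y' t = L - |x' t|) →
      (L - δ/2) * (b - a) ≤ |Y b - Y a| := by
    intro Y Y' hY hcY hpt
    have huicc : uIcc a b = Icc a b := uIcc_of_le hab.le
    have hsub' : uIcc a b ⊆ Icc (0:ℝ) 1 := by rw [huicc]; exact hsub
    have hYi : IntervalIntegrable Y' volume a b := (hcY.mono hsub').intervalIntegrable
    have hYe : ∫ r in a..b, Y' r = Y b - Y a :=
      integral_eq_sub_of_hasDerivAt (fun r hr => hY r (hsub' hr)) hYi
    have hmono : (∫ r in a..b, (L - δ/2 : ℝ)) ≤ ∫ r in a..b, Y' r := by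
      apply integral_mono_on hab.le intervalIntegrable_const hYi
      intro r hr
      rw [hpt r hr]
      linarith [keyx r hr]
    have hconst : (∫ r in a..b, (L - δ/2 : ℝ)) = (b - a) * (L - δ/2) := by
      simp [intervalIntegral.integral_const, smul_eq_mul]
      ring
    calc (L - δ/2) * (b - a) = (b - a) * (L - δ/2) := by ring
      _ ≤ ∫ r in a..b, Y' r := by rw [← hconst]; exact hconst ▸ hmono
      _ ≤ |Y b - Y a| := hYe ▸ le_abs_self _
  have hfin : (L - δ/2) * (b - a) ≤ |y b - y a| := by
    rcases (hyne t₀ ht₀').lt_or_gt with hneg | hpos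
    · have hsign : ∀ t ∈ Icc a b, 0 ≤ -y' t :=
        nonneg_on ((hcy.mono hsub).neg)
          (fun t ht h => hyne t (Ioo_subset_Icc_self ht) (neg_eq_zero.1 h))
          ht₀ (by simpa using hneg)
      have hres := main (fun t => -y t) (fun t => -y' t)
        (fun t ht => (hy t ht).neg) (hcy.neg)
        (fun t ht => by
          show -y' t = L - |x' t|
          rw [← hlx t ht, abs_of_nonpos (by linarith [hsign t ht])])
      calc (L - δ/2) * (b - a) ≤ |(fun t => -y t) b - (fun t => -y t) a| := hres
        _ = |y b - y a| := by
          show |-y b - -y a| = _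
          rw [show -y b - -y a = -(y b - y a) by ring, abs_neg]
    · have hsign : ∀ t ∈ Icc a b, 0 ≤ y' t :=
        nonneg_on (hcy.mono hsub)
          (fun t ht h => hyne t (Ioo_subset_Icc_self ht) h)
          ht₀ hpos
      exact main y y' hy hcy
        (fun t ht => by rw [← hlx t ht, abs_of_nonneg (hsign t ht)])
  linarith [abs_nonneg (x b - x a), hfin]

lemma cell {x y x' y' : ℝ → ℝ} {L δ : ℝ} (hδ0 : 0 ≤ δ) (hδL : δ < L)
    (hx : ∀ t ∈ Icc (0:ℝ) 1, HasDerivAt x (x' t) t)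
    (hy : ∀ t ∈ Icc (0:ℝ) 1, HasDerivAt y (y' t) t)
    (hcx : ContinuousOn x' (Icc 0 1)) (hcy : ContinuousOn y' (Icc 0 1))
    (hspeed : ∀ t ∈ Icc (0:ℝ) 1, |x' t| + |y' t| = L)
    {a b : ℝ} (ha : 0 ≤ a) (hab : a < b) (hb : b ≤ 1)
    (hmodw : ∀ s ∈ Icc a b, ∀ t ∈ Icc a b, |s - t| < b - a →
      |x' s - x' t| + |y' s - y' t| ≤ δ) :
    (L - δ/2) * (b - a) ≤ |x b - x a| + |y b - y a| := by
  by_cases hX : ∃ t₀ ∈ Ioo a b, x' t₀ = 0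
  · exact cellA hδ0 hδL hy hcx hcy hspeed ha hab hb hmodw hX
  by_cases hY : ∃ t₀ ∈ Ioo a b, y' t₀ = 0
  · have hres := cellA (x := y) (y := x) (x' := y') (y' := x') hδ0 hδL hx hcy hcx
      (fun t ht => by rw [add_comm]; exact hspeed t ht) ha hab hb
      (fun s hs t ht hd => by
        have := hmodw s hs t ht hd; linarith [this]) hY
    linarith [hres]
  -- both derivatives have constant sign
  push_neg at hX hY
  have hsub : Icc a b ⊆ Icc (0:ℝ) 1 := Icc_subset_Icc ha hb
  have huicc : uIcc a b = Icc a b := uIcc_of_le hab.le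
  have hsub' : uIcc a b ⊆ Icc (0:ℝ) 1 := by rw [huicc]; exact hsub
  have hxi : IntervalIntegrable x' volume a b := (hcx.mono hsub').intervalIntegrable
  have hyi : IntervalIntegrable y' volume a b := (hcy.mono hsub').intervalIntegrable
  have hxe : ∫ r in a..b, x' r = x b - x a :=
    integral_eq_sub_of_hasDerivAt (fun r hr => hx r (hsub' hr)) hxi
  have hye : ∫ r in a..b, y' r = y b - y a :=
    integral_eq_sub_of_hasDerivAt (fun r hr => hy r (hsub' hr)) hyi
  have hmid : (a+b)/2 ∈ Ioo a b := ⟨by linarith, by linarith⟩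
  have absint : ∀ f' : ℝ → ℝ, ContinuousOn f' (Icc 0 1) →
      (∀ t ∈ Ioo a b, f' t ≠ 0) → ∀ F : ℝ,
      (∫ r in a..b, f' r) = F → (∫ r in a..b, |f' r|) ≤ |F| := by
    intro f' hcf h0 F hFe
    rcases (h0 _ hmid).lt_or_gt with hneg | hpos
    · have hs : ∀ t ∈ Icc a b, 0 ≤ -f' t :=
        nonneg_on ((hcf.mono hsub).neg)
          (fun t ht h => h0 t ht (neg_eq_zero.1 h)) hmid (by simpa using hneg)
      have hcongr : (∫ r in a..b, |f' r|) = ∫ r in a..b, -f' r := by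
        apply integral_congr
        intro r hr
        rw [huicc] at hr
        exact abs_of_nonpos (by linarith [hs r hr])
      rw [hcongr, intervalIntegral.integral_neg, hFe]
      exact neg_le_abs F
    · have hs : ∀ t ∈ Icc a b, 0 ≤ f' t :=
        nonneg_on (hcf.mono hsub) h0 hmid hpos
      have hcongr : (∫ r in a..b, |f' r|) = ∫ r in a..b, f' r := by
        apply integral_congr
        intro r hr
        rw [huicc] at hr
        exact abs_of_nonneg (hs r hr)
      rw [hcongr, hFe]
      exact le_abs_self F
  have hxabs := absint x' hcx hX (x b - x a) hxe
  have hyabs := absint y' hcy hY (y b - y a) hye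
  have hsum : (∫ r in a..b, |x' r|) + (∫ r in a..b, |y' r|)
      = ∫ r in a..b, (|x' r| + |y' r|) := (integral_add hxi.abs hyi.abs).symm
  have hca : (∫ r in a..b, (|x' r| + |y' r|)) = ∫ r in a..b, (L:ℝ) :=
    integral_congr (fun r hr => hspeed r (hsub' hr))
  have hconst : (∫ r in a..b, (L:ℝ)) = (b - a) * L := by
    simp [intervalIntegral.integral_const, smul_eq_mul]
  nlinarith [hxabs, hyabs, hsum, hca, hconst, hδ0, sub_pos.2 hab]

lemma amgm_prod {S : Finset ℕ} {f : ℕ → ℝ} {n : ℕ} (hn : 0 < n) (hcard : S.card = n)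
    (hf : ∀ i ∈ S, 0 ≤ f i) : ∏ i ∈ S, f i ≤ ((∑ i ∈ S, f i)/n)^n := by
  have hn0 : (0:ℝ) < n := by exact_mod_cast hn
  have hw : ∀ i ∈ S, (0:ℝ) ≤ (n:ℝ)⁻¹ := fun i _ => by positivity
  have hw' : ∑ _i ∈ S, ((n:ℝ)⁻¹) = 1 := by
    rw [Finset.sum_const, hcard, nsmul_eq_mul]
    field_simp
  have geo := Real.geom_mean_le_arith_mean_weighted S (fun _ => (n:ℝ)⁻¹) f hw hw' hf
  have hsum : ∑ i ∈ S, (n:ℝ)⁻¹ * f i = (∑ i ∈ S, f i)/n := by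
    rw [← Finset.mul_sum]; ring
  rw [hsum] at geo
  have hpow := pow_le_pow_left₀
    (Finset.prod_nonneg (fun i hi => Real.rpow_nonneg (hf i hi) _)) geo n
  have hLHS : (∏ i ∈ S, f i ^ ((n:ℝ)⁻¹))^n = ∏ i ∈ S, f i := by
    rw [← Finset.prod_pow]
    apply Finset.prod_congr rfl
    intro i hi
    rw [← Real.rpow_natCast (f i ^ ((n:ℝ)⁻¹)) n, ← Real.rpow_mul (hf i hi),
      inv_mul_cancel₀ (by positivity : (n:ℝ) ≠ 0), Real.rpow_one]
  rw [hLHS] at hpow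
  exact hpow

end helpers

theorem stmt5 (x y x' y' : ℝ → ℝ) (L : ℝ) (hL : 0 < L)
    (hx : ∀ t ∈ Icc (0:ℝ) 1, HasDerivAt x (x' t) t)
    (hy : ∀ t ∈ Icc (0:ℝ) 1, HasDerivAt y (y' t) t)
    (hcx : ContinuousOn x' (Icc 0 1)) (hcy : ContinuousOn y' (Icc 0 1))
    (hspeed : ∀ t ∈ Icc (0:ℝ) 1, |x' t| + |y' t| = L)
    (k : ℕ) (hk : 2 ≤ k) (δ : ℝ)
    (hmod : ∀ s ∈ Icc (0:ℝ) 1, ∀ t ∈ Icc (0:ℝ) 1,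
      |s - t| < 1 / k → |x' s - x' t| + |y' s - y' t| ≤ δ)
    (hδL : δ / L + 1 / k < 1)
    (hinc : ∀ i : ℕ, 1 ≤ i → i ≤ k →
      (L - δ) / k ≤ |x ((i:ℝ)/k) - x (((i:ℝ)-1)/k)| + |y ((i:ℝ)/k) - y (((i:ℝ)-1)/k)|)
    (u : ℕ → ℝ) (hu0 : u 0 = 0) (huk : u k = 1)
    (hmono : ∀ i < k, u i < u (i + 1))
    (hdev : ∃ j : ℕ, 1 ≤ j ∧ j ≤ k - 1 ∧
      Real.sqrt (δ / L) + Real.sqrt (1 / k) < |u j - (j:ℝ)/k|) :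
    (∏ i ∈ Finset.range k,
        ((|x (u (i + 1)) - x (u i)| + |y (u (i + 1)) - y (u i)|) /
          (|x (((i:ℝ)+1)/k) - x ((i:ℝ)/k)| + |y (((i:ℝ)+1)/k) - y ((i:ℝ)/k)|)))
      < (1 - δ / L - 1 / k) ^ k ∧
    (1 - δ / L - 1 / k) ^ k < 1 / Real.exp 1 := by
  have hk0 : (0:ℝ) < k := by exact_mod_cast (by omega : 0 < k)
  have hq0 : (0:ℝ) < 1/k := by positivity
  have hδ0 : 0 ≤ δ := by
    have h := hmod 0 (by norm_num) 0 (by norm_num) (by simpa using hq0)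
    simpa using h
  have hp0 : 0 ≤ δ/L := div_nonneg hδ0 hL.le
  have hp1 : δ/L < 1 := by linarith
  have hδL' : δ < L := by
    have := (div_lt_one hL).1 hp1
    linarith
  have hβ0 : (0:ℝ) < 1 - δ/L - 1/k := by linarith
  constructor
  · -- main inequality
    -- u is monotone
    have hult : ∀ n, n ≤ k → ∀ m, m < n → u m < u n := by
      intro n
      induction n with
      | zero => exact fun _ m hm => absurd hm (Nat.not_lt_zero m)
      | succ n ih =>
        intro hn m hm
        have hnk : n < k := by omega
        have h1 : u n < u (n+1) := hmono n hnk
        rcases Nat.lt_succ_iff_lt_or_eq.1 hm with h | h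
        · exact (ih (by omega) m h).trans h1
        · rw [h]; exact h1
    have hub : ∀ i, i ≤ k → 0 ≤ u i ∧ u i ≤ 1 := by
      intro i hi
      constructor
      · rcases Nat.eq_zero_or_pos i with h | h
        · rw [h, hu0]
        · have := hult i hi 0 h; rw [hu0] at this; linarith
      · rcases eq_or_lt_of_le hi with h | h
        · rw [h, huk]
        · have := hult k le_rfl i h; rw [huk] at this; linarith
    have hstep : ∀ i, i < k → 0 < u (i+1) - u i := fun i hi => sub_pos.2 (hmono i hi)
    have htel : ∑ i ∈ Finset.range k, (u (i+1) - u i) = 1 := by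
      rw [Finset.sum_range_sub (f := u), huk, hu0]; ring
    -- numerators
    have hnum : ∀ i, i < k →
        |x (u (i+1)) - x (u i)| + |y (u (i+1)) - y (u i)| ≤ L * (u (i+1) - u i) := by
      intro i hi
      exact lip hx hy hcx hcy hspeed (hub i (by omega)).1 (hmono i hi).le
        (hub (i+1) (by omega)).2
    -- denominators
    have hden : ∀ i : ℕ, i < k → (L - δ/2) * (1/k) ≤
        |x (((i:ℝ)+1)/k) - x ((i:ℝ)/k)| + |y (((i:ℝ)+1)/k) - y ((i:ℝ)/k)| := by
      intro i hi
      have hik : (i:ℝ) < k := by exact_mod_cast hi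
      have hik1 : (i:ℝ) + 1 ≤ k := by exact_mod_cast Nat.succ_le_of_lt hi
      have ha : (0:ℝ) ≤ (i:ℝ)/k := by positivity
      have hab : (i:ℝ)/k < ((i:ℝ)+1)/k := by
        rw [div_lt_div_iff₀ hk0 hk0]; nlinarith
      have hb1 : ((i:ℝ)+1)/k ≤ 1 := (div_le_one hk0).2 hik1
      have hlen : ((i:ℝ)+1)/k - (i:ℝ)/k = 1/k := by
        rw [div_sub_div_same]; ring_nf
      have hres := cell hδ0 hδL' hx hy hcx hcy hspeed ha hab hb1
        (fun s hs t ht hd => hmod s (Icc_subset_Icc ha hb1 hs) t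
          (Icc_subset_Icc ha hb1 ht) (by rwa [hlen] at hd))
      rwa [hlen] at hres
    -- the deviation index
    obtain ⟨j, hj1, hj2, hjdev⟩ := hdev
    have hjk : j < k := by omega
    have hjr : (0:ℝ) < j := by exact_mod_cast hj1
    have hjkr : (j:ℝ) < k := by exact_mod_cast hjk
    have hmj : 0 < k - j := by omega
    have hmjr : (0:ℝ) < ((k - j : ℕ):ℝ) := by exact_mod_cast hmj
    have hcast : ((k - j : ℕ):ℝ) = (k:ℝ) - j := by
      rw [Nat.cast_sub hjk.le]
    -- v and α
    have hv0 : 0 < u j := by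
      have := hult j hjk.le 0 (by omega); rwa [hu0] at this
    have hv1 : u j < 1 := by
      have := hult k le_rfl j hjk; rwa [huk] at this
    have hα0 : (0:ℝ) < (j:ℝ)/k := by positivity
    have hα1 : (j:ℝ)/k < 1 := (div_lt_one hk0).2 hjkr
    -- KL bound
    have hKL := kl_main hα0 hα1 hv0 hv1 hp0 hq0 hδL hjdev
    -- abbreviations
    set c : ℝ := (L - δ/2)/k with hc
    have hc0 : 0 < c := by
      rw [hc]; apply div_pos (by linarith) hk0
    have hceq : c = (L - δ/2) * (1/k) := by rw [hc]; ring
    -- step 1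
    have hprod1 : (∏ i ∈ Finset.range k,
        ((|x (u (i + 1)) - x (u i)| + |y (u (i + 1)) - y (u i)|) /
          (|x (((i:ℝ)+1)/k) - x ((i:ℝ)/k)| + |y (((i:ℝ)+1)/k) - y ((i:ℝ)/k)|)))
        ≤ ∏ i ∈ Finset.range k, (L * (u (i+1) - u i) / c) := by
      apply Finset.prod_le_prod
      · intro i _
        apply div_nonneg (by positivity) (by positivity)
      · intro i hi
        have hik := Finset.mem_range.1 hi
        apply div_le_div₀ (mul_nonneg hL.le (hstep i hik).le) (hnum i hik) hc0
        exact hceq ▸ hden i hik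
    -- step 2
    have hprod2 : ∏ i ∈ Finset.range k, (L * (u (i+1) - u i)/c)
        = (L/c)^k * ∏ i ∈ Finset.range k, (u (i+1) - u i) := by
      have h1 : (L/c)^k = ∏ _i ∈ Finset.range k, (L/c) := by
        rw [Finset.prod_const, Finset.card_range]
      rw [h1, ← Finset.prod_mul_distrib]
      exact Finset.prod_congr rfl (fun i _ => by ring)
    -- step 3 : split and AM-GM
    have hsplit : ∏ i ∈ Finset.range k, (u (i+1) - u i)
        = (∏ i ∈ Finset.range j, (u (i+1) - u i)) *
          (∏ i ∈ Finset.Ico j k, (u (i+1) - u i)) := by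
      rw [Finset.range_eq_Ico,
        ← Finset.prod_Ico_consecutive _ (Nat.zero_le j) hjk.le, ← Finset.range_eq_Ico]
    have hsum1 : ∑ i ∈ Finset.range j, (u (i+1) - u i) = u j := by
      rw [Finset.sum_range_sub (f := u), hu0]; ring
    have hsum2 : ∑ i ∈ Finset.Ico j k, (u (i+1) - u i) = 1 - u j := by
      rw [Finset.sum_Ico_eq_sub _ hjk.le, Finset.sum_range_sub (f := u),
        Finset.sum_range_sub (f := u), hu0, huk]
      ring
    have ham1 : ∏ i ∈ Finset.range j, (u (i+1) - u i) ≤ (u j / j)^j := by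
      have h := amgm_prod (n := j) (by omega) (Finset.card_range j)
        (fun i hi => (hstep i (by have := Finset.mem_range.1 hi; omega)).le)
      rwa [hsum1] at h
    have ham2 : ∏ i ∈ Finset.Ico j k, (u (i+1) - u i)
        ≤ ((1 - u j) / ((k-j:ℕ):ℝ))^(k-j:ℕ) := by
      have h := amgm_prod (n := k - j) hmj (Nat.card_Ico j k)
        (fun i hi => (hstep i (Finset.mem_Ico.1 hi).2).le)
      rwa [hsum2] at h
    -- step 4 : core comparison
    set β : ℝ := 1 - δ/L - 1/k with hβ
    set D : ℝ := 1 - (δ/L)/2 with hD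
    have hD0 : 0 < D := by rw [hD]; linarith
    have hC0 : 0 < β * D := mul_pos hβ0 hD0
    have hA : (0:ℝ) < k * u j / j := by positivity
    have h1v : (0:ℝ) < 1 - u j := by linarith
    have hB : (0:ℝ) < k * (1 - u j)/((k-j:ℕ):ℝ) := by positivity
    have eA : ((k:ℝ) * u j / j)^j = Real.exp (j * Real.log ((k:ℝ) * u j / j)) := by
      rw [← Real.exp_log hA, ← Real.exp_nat_mul, Real.log_exp]
    have eB : ((k:ℝ) * (1 - u j)/((k-j:ℕ):ℝ))^(k-j:ℕ)
        = Real.exp (((k-j:ℕ):ℝ) * Real.log ((k:ℝ) * (1 - u j)/((k-j:ℕ):ℝ))) := by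
      rw [← Real.exp_log hB, ← Real.exp_nat_mul, Real.log_exp]
    have hlogA : Real.log ((k:ℝ) * u j / j) = - Real.log (((j:ℝ)/k) / u j) := by
      rw [← Real.log_inv]
      congr 1
      rw [inv_div]
      field_simp
    have hlogB : Real.log ((k:ℝ) * (1 - u j)/((k-j:ℕ):ℝ))
        = - Real.log ((1 - (j:ℝ)/k) / (1 - u j)) := by
      rw [← Real.log_inv]
      congr 1
      rw [inv_div, hcast]
      field_simp
    have hjα : (j:ℝ) = k * ((j:ℝ)/k) := by field_simp
    have hmα : ((k-j:ℕ):ℝ) = k * (1 - (j:ℝ)/k) := by rw [hcast]; field_simp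
    have hexpo : (j:ℝ) * Real.log ((k:ℝ) * u j / j)
        + ((k-j:ℕ):ℝ) * Real.log ((k:ℝ) * (1 - u j)/((k-j:ℕ):ℝ))
        < (k:ℝ) * Real.log (β * D) := by
      rw [hlogA, hlogB]
      set LA := Real.log (((j:ℝ)/k) / u j) with hLA
      set LB := Real.log ((1 - (j:ℝ)/k)/(1 - u j)) with hLB
      have hKL' : -Real.log (β * D) < ((j:ℝ)/k) * LA + (1 - (j:ℝ)/k) * LB := hKL
      calc (j:ℝ) * -LA + ((k-j:ℕ):ℝ) * -LB
          = (k:ℝ) * -(((j:ℝ)/k) * LA + (1 - (j:ℝ)/k) * LB) := by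
            rw [hcast]; field_simp; ring
        _ < (k:ℝ) * Real.log (β * D) := by
            apply mul_lt_mul_of_pos_left _ hk0
            linarith
    have hX : ((k:ℝ) * u j / j)^j * ((k:ℝ) * (1 - u j)/((k-j:ℕ):ℝ))^(k-j:ℕ)
        < (β * D)^k := by
      rw [eA, eB, ← Real.exp_add]
      have : (β * D)^k = Real.exp ((k:ℝ) * Real.log (β * D)) := by
        rw [← Real.exp_log hC0, ← Real.exp_nat_mul, Real.log_exp]
      rw [this]
      exact Real.exp_lt_exp.2 hexpo
    -- step 5 : assemble
    have hLc : L/c = (k:ℝ) / D := by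
      rw [hc, hD]
      rw [div_div_eq_mul_div, div_eq_div_iff (by linarith) (by linarith)]
      field_simp
    have hmain : (L/c)^k * ((u j / j)^j * ((1 - u j)/((k-j:ℕ):ℝ))^(k-j:ℕ))
        = (((k:ℝ) * u j / j)^j * ((k:ℝ) * (1 - u j)/((k-j:ℕ):ℝ))^(k-j:ℕ)) / D^k := by
      rw [hLc, div_pow]
      have hkk : (k:ℝ)^k = (k:ℝ)^j * (k:ℝ)^(k-j:ℕ) := by
        rw [← pow_add]
        congr 1
        omega
      rw [hkk]
      rw [show (k:ℝ) * u j / j = (k:ℝ) * (u j / j) by ring,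
        show (k:ℝ) * (1 - u j)/((k-j:ℕ):ℝ) = (k:ℝ) * ((1 - u j)/((k-j:ℕ):ℝ)) by ring,
        mul_pow, mul_pow]
      ring
    have hstep5 : (L/c)^k * ∏ i ∈ Finset.range k, (u (i+1) - u i)
        ≤ (((k:ℝ) * u j / j)^j * ((k:ℝ) * (1 - u j)/((k-j:ℕ):ℝ))^(k-j:ℕ)) / D^k := by
      rw [← hmain, hsplit]
      apply mul_le_mul_of_nonneg_left _ (by positivity)
      apply mul_le_mul ham1 ham2
        (Finset.prod_nonneg (fun i hi => (hstep i (Finset.mem_Ico.1 hi).2).le))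
        (by positivity)
    have hfinal : (((k:ℝ) * u j / j)^j * ((k:ℝ) * (1 - u j)/((k-j:ℕ):ℝ))^(k-j:ℕ)) / D^k
        < β^k := by
      rw [div_lt_iff₀ (by positivity)]
      calc (((k:ℝ) * u j / j)^j * ((k:ℝ) * (1 - u j)/((k-j:ℕ):ℝ))^(k-j:ℕ))
          < (β * D)^k := hX
        _ = β^k * D^k := mul_pow β D k
    calc (∏ i ∈ Finset.range k,
        ((|x (u (i + 1)) - x (u i)| + |y (u (i + 1)) - y (u i)|) /
          (|x (((i:ℝ)+1)/k) - x ((i:ℝ)/k)| + |y (((i:ℝ)+1)/k) - y ((i:ℝ)/k)|)))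
        ≤ ∏ i ∈ Finset.range k, (L * (u (i+1) - u i) / c) := hprod1
      _ = (L/c)^k * ∏ i ∈ Finset.range k, (u (i+1) - u i) := hprod2
      _ ≤ (((k:ℝ) * u j / j)^j * ((k:ℝ) * (1 - u j)/((k-j:ℕ):ℝ))^(k-j:ℕ)) / D^k := hstep5
      _ < β^k := hfinal
  · -- second part
    have hpq0 : 0 < δ/L + 1/k := by
      have : (0:ℝ) < 1/k := hq0
      linarith
    have h1 : 1 - (δ/L + 1/k) < Real.exp (-(δ/L + 1/k)) := by
      have h := Real.add_one_lt_exp (x := -(δ/L + 1/k)) (by linarith)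
      linarith
    have h0 : (0:ℝ) ≤ 1 - δ/L - 1/k := by linarith
    have h2 : (1 - δ/L - 1/k)^k < (Real.exp (-(δ/L + 1/k)))^k := by
      apply pow_lt_pow_left₀ (by linarith) h0 (by omega)
    have h3 : (Real.exp (-(δ/L + 1/k)))^k = Real.exp ((k:ℝ) * -(δ/L + 1/k)) := by
      rw [← Real.exp_nat_mul]
    have hk1 : (k:ℝ) * (1/k) = 1 := by field_simp
    have h4 : Real.exp ((k:ℝ) * -(δ/L + 1/k)) ≤ Real.exp (-1) := by
      apply Real.exp_le_exp.2
      nlinarith [hp0, hk0]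
    have h5 : Real.exp (-1:ℝ) = 1/Real.exp 1 := by
      rw [Real.exp_neg]
      exact inv_eq_one_div _
    linarith
end

section
/- Let γ : [0,1] → ℝ² be C¹ at uniform ℓ¹-speed L > 0, δ_k the modulus of continuity of γ̇ at scale 1/k, and ε_k = √(δ_k/L) + √(1/k). Let E_{k-1} = {u ∈ Δ_{k-1} : |u_j - j/k| < ε_k for all j}. Then there exist a constant c > 0 and K such that for all k ≥ K and n = ⌈k² log k⌉: ∫_{Δ_{k-1} ∩ E_{k-1}} ∏_{j=1}^{k} |Δ_{u_j} γ|^n du ≥ (1 - e^{-cn}) ∫_{Δ_{k-1}} ∏_{j=1}^{k} |Δ_{u_j} γ|^n du. -/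
open Set MeasureTheory

/-- The `i`-th partition point determined by `u ∈ ℝ^{k-1}`, with the
conventions `u₀ = 0` and `u_k = 1`. -/
def pt (k : ℕ) (u : Fin (k-1) → ℝ) (i : ℕ) : ℝ :=
  if _h0 : i = 0 then 0
  else if h : i ≤ k - 1 then u ⟨i - 1, by omega⟩ else 1


lemma my_log_one_sub_ge {x : ℝ} (h0 : 0 ≤ x) (h2 : x ≤ 1/2) : -(2*x) ≤ Real.log (1 - x) := by
  have h1 : (0:ℝ) < 1 - x := by linarith
  rw [← Real.log_exp (-(2*x))]
  apply Real.log_le_log (Real.exp_pos _)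
  have h3 := Real.add_one_le_exp (2*x)
  have h4 : Real.exp (-(2*x)) * Real.exp (2*x) = 1 := by
    rw [← Real.exp_add]; simp
  nlinarith [Real.exp_pos (-(2*x)), Real.exp_pos (2*x)]

lemma my_pinsker {p t : ℝ} (hp : p ∈ Set.Ioo (0:ℝ) 1) (ht : t ∈ Set.Ioo (0:ℝ) 1) :
    p * Real.log (t/p) + (1-p) * Real.log ((1-t)/(1-p)) + 2*(t-p)^2 ≤ 0 := by
  obtain ⟨hp0, hp1⟩ := hp
  obtain ⟨ht0, ht1⟩ := ht
  set ψ : ℝ → ℝ := fun s =>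
    p * Real.log s - p * Real.log p + (1-p) * Real.log (1-s) - (1-p) * Real.log (1-p)
      + 2*(s-p)^2 with hψ
  have hder : ∀ s ∈ Set.Ioo (0:ℝ) 1, HasDerivAt ψ ((s-p)*(4 - 1/(s*(1-s)))) s := by
    intro s hs
    obtain ⟨hs0, hs1⟩ := hs
    have h1s : (0:ℝ) < 1 - s := by linarith
    have d1 : HasDerivAt (fun s : ℝ => p * Real.log s) (p * (1/s)) s := by
      simpa using (Real.hasDerivAt_log (ne_of_gt hs0)).const_mul p
    have d2 : HasDerivAt (fun s : ℝ => Real.log (1-s)) (-(1/(1-s))) s := by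
      have := ((hasDerivAt_id s).const_sub 1)
      have := (Real.hasDerivAt_log (ne_of_gt h1s)).comp s this
      exact this.congr_deriv (by simp)
    have d3 : HasDerivAt (fun s : ℝ => (1-p) * Real.log (1-s)) ((1-p) * (-(1/(1-s)))) s :=
      d2.const_mul _
    have d4 : HasDerivAt (fun s : ℝ => 2*(s-p)^2) (2*(2*(s-p))) s := by
      have h := ((hasDerivAt_id s).sub_const p).pow 2
      simpa using h.const_mul 2
    have := ((d1.sub_const (p * Real.log p)).add d3).sub_const ((1-p) * Real.log (1-p))
    have h := this.add d4
    refine h.congr_deriv ?_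
    have hs0' : s ≠ 0 := ne_of_gt hs0
    have h1s' : 1 - s ≠ 0 := ne_of_gt h1s
    field_simp
    ring
  have hcont : ContinuousOn ψ (Set.Ioo (0:ℝ) 1) := fun s hs =>
    ((hder s hs).continuousAt).continuousWithinAt
  have hψp : ψ p = 0 := by simp [hψ]
  have key : ψ t ≤ 0 := by
    rcases le_total p t with hpt | hpt
    · have haux : AntitoneOn ψ (Set.Icc p t) := by
        apply antitoneOn_of_deriv_nonpos (convex_Icc p t)
        · exact hcont.mono (fun s hs => ⟨lt_of_lt_of_le hp0 hs.1, lt_of_le_of_lt hs.2 ht1⟩)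
        · intro s hs
          rw [interior_Icc] at hs
          exact ((hder s ⟨lt_trans hp0 hs.1, lt_of_lt_of_le hs.2 ht1.le⟩).differentiableAt).differentiableWithinAt
        · intro s hs
          rw [interior_Icc] at hs
          have hs0 : 0 < s := lt_trans hp0 hs.1
          have hs1 : s < 1 := lt_of_lt_of_le hs.2 ht1.le
          rw [(hder s ⟨hs0, hs1⟩).deriv]
          have h4 : s*(1-s) ≤ 1/4 := by nlinarith [sq_nonneg (2*s-1)]
          have hpos : 0 < s*(1-s) := by nlinarith
          have h5 : (4:ℝ) ≤ 1/(s*(1-s)) := by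
            rw [le_div_iff₀ hpos]; linarith
          apply mul_nonpos_of_nonneg_of_nonpos
          · linarith [hs.1]
          · linarith
      have := haux (Set.left_mem_Icc.2 hpt) (Set.right_mem_Icc.2 hpt) hpt
      rw [hψp] at this; exact this
    · have haux : MonotoneOn ψ (Set.Icc t p) := by
        apply monotoneOn_of_deriv_nonneg (convex_Icc t p)
        · exact hcont.mono (fun s hs => ⟨lt_of_lt_of_le ht0 hs.1, lt_of_le_of_lt hs.2 hp1⟩)
        · intro s hs
          rw [interior_Icc] at hs
          exact ((hder s ⟨lt_trans ht0 hs.1, lt_of_lt_of_le hs.2 hp1.le⟩).differentiableAt).differentiableWithinAt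
        · intro s hs
          rw [interior_Icc] at hs
          have hs0 : 0 < s := lt_trans ht0 hs.1
          have hs1 : s < 1 := lt_of_lt_of_le hs.2 hp1.le
          rw [(hder s ⟨hs0, hs1⟩).deriv]
          have h4 : s*(1-s) ≤ 1/4 := by nlinarith [sq_nonneg (2*s-1)]
          have hpos : 0 < s*(1-s) := by nlinarith
          have h5 : (4:ℝ) ≤ 1/(s*(1-s)) := by
            rw [le_div_iff₀ hpos]; linarith
          have h6 : s - p ≤ 0 := by linarith [hs.2]
          nlinarith
      have := haux (Set.left_mem_Icc.2 hpt) (Set.right_mem_Icc.2 hpt) hpt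
      rw [hψp] at this; exact this
  have e1 : Real.log (t/p) = Real.log t - Real.log p := Real.log_div (ne_of_gt ht0) (ne_of_gt hp0)
  have e2 : Real.log ((1-t)/(1-p)) = Real.log (1-t) - Real.log (1-p) :=
    Real.log_div (by intro h; linarith [h]; ) (by intro h; nlinarith [h])
  rw [e1, e2]
  have : ψ t = p * Real.log t - p * Real.log p + (1-p) * Real.log (1-t)
      - (1-p) * Real.log (1-p) + 2*(t-p)^2 := rfl
  nlinarith [key, this]


lemma my_amgm (s : Finset ℕ) (g : ℕ → ℝ) (h0 : ∀ i ∈ s, 0 ≤ g i) (hne : s.Nonempty) :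
    ∏ i ∈ s, g i ≤ ((∑ i ∈ s, g i) / s.card) ^ (s.card) := by
  have hcard : 0 < (s.card : ℝ) := by
    exact_mod_cast Finset.card_pos.2 hne
  have hw : ∑ _i ∈ s, (1 / (s.card:ℝ)) = 1 := by
    rw [Finset.sum_const, nsmul_eq_mul]; field_simp
  have key := Real.geom_mean_le_arith_mean_weighted s (fun _ => 1/(s.card:ℝ)) g
    (fun i _ => by positivity) hw h0
  have hprod : ∏ i ∈ s, g i ^ (1/(s.card:ℝ)) = (∏ i ∈ s, g i) ^ (1/(s.card:ℝ)) :=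
    Real.finset_prod_rpow s g h0 _
  rw [hprod] at key
  have hsum : ∑ i ∈ s, (1/(s.card:ℝ)) * g i = (∑ i ∈ s, g i) / s.card := by
    rw [← Finset.mul_sum]; ring
  rw [hsum] at key
  have hP : 0 ≤ ∏ i ∈ s, g i := Finset.prod_nonneg h0
  calc ∏ i ∈ s, g i = ((∏ i ∈ s, g i) ^ (1/(s.card:ℝ))) ^ (s.card : ℕ) := by
        rw [← Real.rpow_natCast (((∏ i ∈ s, g i) ^ (1/(s.card:ℝ)))) s.card,
          ← Real.rpow_mul hP]
        rw [one_div, inv_mul_cancel₀ (ne_of_gt hcard), Real.rpow_one]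
    _ ≤ ((∑ i ∈ s, g i) / s.card) ^ (s.card : ℕ) := by
        apply pow_le_pow_left₀ (Real.rpow_nonneg hP _) key


lemma my_entropy (k a : ℕ) (ha1 : 1 ≤ a) (hak : a < k) {t : ℝ} (ht : t ∈ Set.Ioo (0:ℝ) 1) :
    (t/a)^a * ((1-t)/((k-a : ℕ):ℝ))^(k-a) ≤ ((1:ℝ)/k)^k * Real.exp (-(2*k)*(t - a/k)^2) := by
  obtain ⟨ht0, ht1⟩ := ht
  have hk0 : (0:ℝ) < k := by exact_mod_cast (by omega : 0 < k)
  have ha0 : (0:ℝ) < a := by exact_mod_cast ha1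
  have hb0 : (0:ℝ) < ((k-a:ℕ):ℝ) := by exact_mod_cast (by omega : 0 < k - a)
  have hbcast : ((k-a:ℕ):ℝ) = (k:ℝ) - a := by
    push_cast [Nat.cast_sub hak.le]; ring
  set p : ℝ := (a:ℝ)/k with hpdef
  have hp : p ∈ Set.Ioo (0:ℝ) 1 := by
    constructor
    · positivity
    · rw [div_lt_one hk0]; exact_mod_cast hak
  have hpin := my_pinsker hp ⟨ht0, ht1⟩
  -- positivity of sides
  have h1t : (0:ℝ) < 1 - t := by linarith
  have hL1 : (0:ℝ) < (t/a)^a := by positivity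
  have hL2 : (0:ℝ) < ((1-t)/((k-a:ℕ):ℝ))^(k-a) := by positivity
  have hLpos : (0:ℝ) < (t/a)^a * ((1-t)/((k-a:ℕ):ℝ))^(k-a) := mul_pos hL1 hL2
  have hRpos : (0:ℝ) < ((1:ℝ)/k)^k * Real.exp (-(2*k)*(t - a/k)^2) := by positivity
  rw [← Real.exp_log hLpos, ← Real.exp_log hRpos]
  apply Real.exp_le_exp.2
  rw [Real.log_mul (ne_of_gt hL1) (ne_of_gt hL2), Real.log_mul (by positivity) (ne_of_gt (Real.exp_pos _)),
    Real.log_pow, Real.log_pow, Real.log_pow, Real.log_exp,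
    Real.log_div (ne_of_gt ht0) (ne_of_gt ha0), Real.log_div (ne_of_gt h1t) (ne_of_gt hb0),
    Real.log_div (one_ne_zero) (ne_of_gt hk0), Real.log_one]
  -- rewrite pinsker's logs
  have e1 : Real.log (t/p) = Real.log t - Real.log a + Real.log k := by
    rw [Real.log_div (ne_of_gt ht0) (ne_of_gt hp.1), hpdef,
      Real.log_div (ne_of_gt ha0) (ne_of_gt hk0)]
    ring
  have e2 : Real.log ((1-t)/(1-p)) = Real.log (1-t) - Real.log ((k-a:ℕ):ℝ) + Real.log k := by
    have h1p : 1 - p = ((k-a:ℕ):ℝ)/k := by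
      rw [hbcast, hpdef]; field_simp
    rw [Real.log_div (ne_of_gt h1t) (by rw [h1p]; positivity), h1p,
      Real.log_div (ne_of_gt hb0) (ne_of_gt hk0)]
    ring
  rw [e1, e2] at hpin
  have hka : (k:ℝ) * p = a := by rw [hpdef]; field_simp
  have hk1p : (k:ℝ) * (1 - p) = ((k-a:ℕ):ℝ) := by rw [hbcast, hpdef]; field_simp
  have hcast2 : ((k-a:ℕ):ℝ) = (k:ℝ) - a := hbcast
  have hmul := mul_le_mul_of_nonneg_left hpin (le_of_lt hk0)
  rw [mul_zero, mul_add, mul_add, ← mul_assoc, ← mul_assoc ((k:ℝ)) (1-p), hka, hk1p] at hmul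
  rw [hbcast] at hmul ⊢
  have hpt : p = (a:ℝ)/k := hpdef
  rw [hpt] at hmul
  nlinarith [hmul]

section chords
open intervalIntegral

section chords
variable (x y x' y' : ℝ → ℝ) (L : ℝ)
variable (hx : ∀ t ∈ Icc (0:ℝ) 1, HasDerivAt x (x' t) t)
variable (hy : ∀ t ∈ Icc (0:ℝ) 1, HasDerivAt y (y' t) t)
variable (hcx : ContinuousOn x' (Icc 0 1)) (hcy : ContinuousOn y' (Icc 0 1))
variable (hspeed : ∀ t ∈ Icc (0:ℝ) 1, |x' t| + |y' t| = L)

include hx hcx in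
lemma my_ftc {a b : ℝ} (h0 : 0 ≤ a) (hab : a ≤ b) (h1 : b ≤ 1) :
    x b - x a = ∫ t in a..b, x' t := by
  have hsub : Icc a b ⊆ Icc 0 1 := Icc_subset_Icc h0 h1
  symm
  apply intervalIntegral.integral_eq_sub_of_hasDerivAt
  · intro t htt
    rw [uIcc_of_le hab] at htt
    exact hx t (hsub htt)
  · apply ContinuousOn.intervalIntegrable
    rw [uIcc_of_le hab]
    exact hcx.mono hsub

include hx hy hcx hcy hspeed in
lemma my_chord_upper {a b : ℝ} (h0 : 0 ≤ a) (hab : a ≤ b) (h1 : b ≤ 1) :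
    |x b - x a| + |y b - y a| ≤ L * (b - a) := by
  have hsub : Icc a b ⊆ Icc 0 1 := Icc_subset_Icc h0 h1
  have hix : IntervalIntegrable x' volume a b := by
    apply ContinuousOn.intervalIntegrable; rw [uIcc_of_le hab]; exact hcx.mono hsub
  have hiy : IntervalIntegrable y' volume a b := by
    apply ContinuousOn.intervalIntegrable; rw [uIcc_of_le hab]; exact hcy.mono hsub
  rw [my_ftc x x' hx hcx h0 hab h1, my_ftc y y' hy hcy h0 hab h1]
  have h2 : |∫ t in a..b, x' t| ≤ ∫ t in a..b, |x' t| := by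
    simpa using intervalIntegral.norm_integral_le_integral_norm (f := x') (μ := volume) hab
  have h3 : |∫ t in a..b, y' t| ≤ ∫ t in a..b, |y' t| := by
    simpa using intervalIntegral.norm_integral_le_integral_norm (f := y') (μ := volume) hab
  have h4 : (∫ t in a..b, |x' t|) + (∫ t in a..b, |y' t|) = ∫ t in a..b, (|x' t| + |y' t|) :=
    (intervalIntegral.integral_add hix.abs hiy.abs).symm
  have h5 : (∫ t in a..b, (|x' t| + |y' t|)) = ∫ t in a..b, L := by
    apply intervalIntegral.integral_congr
    intro t htt
    rw [uIcc_of_le hab] at htt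
    exact hspeed t (hsub htt)
  have h6 : (∫ t in a..b, L) = (b - a) * L := by
    simp [intervalIntegral.integral_const, smul_eq_mul]
  linarith

include hx hy hcx hcy hspeed in
lemma my_chord_lower {a b : ℝ} (k : ℕ) (hk : 0 < k) (d : ℝ)
    (hmodk : ∀ s ∈ Icc (0:ℝ) 1, ∀ t ∈ Icc (0:ℝ) 1, |s - t| < 1 / k →
      |x' s - x' t| + |y' s - y' t| ≤ d)
    (h0 : 0 ≤ a) (hab : a ≤ b) (h1 : b ≤ 1) (hlen : b - a < 2 / k) :
    (L - d) * (b - a) ≤ |x b - x a| + |y b - y a| := by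
  have hsub : Icc a b ⊆ Icc 0 1 := Icc_subset_Icc h0 h1
  set c : ℝ := (a+b)/2 with hc
  have hcmem : c ∈ Icc a b := ⟨by rw [hc]; linarith, by rw [hc]; linarith⟩
  have hcmem1 : c ∈ Icc (0:ℝ) 1 := hsub hcmem
  have hix : IntervalIntegrable x' volume a b := by
    apply ContinuousOn.intervalIntegrable; rw [uIcc_of_le hab]; exact hcx.mono hsub
  have hiy : IntervalIntegrable y' volume a b := by
    apply ContinuousOn.intervalIntegrable; rw [uIcc_of_le hab]; exact hcy.mono hsub
  have hixc : IntervalIntegrable (fun t => x' t - x' c) volume a b := hix.sub intervalIntegrable_const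
  have hiyc : IntervalIntegrable (fun t => y' t - y' c) volume a b := hiy.sub intervalIntegrable_const
  -- pointwise modulus bound on [a,b]
  have hptw : ∀ t ∈ Icc a b, |x' t - x' c| + |y' t - y' c| ≤ d := by
    intro t htt
    apply hmodk t (hsub htt) c hcmem1
    have : |t - c| ≤ (b - a)/2 := by
      rw [abs_le, hc]
      constructor <;> [linarith [htt.1]; linarith [htt.2]]
    calc |t - c| ≤ (b-a)/2 := this
      _ < 1/k := by
        have h2k : (2:ℝ)/k = 2*(1/k) := by ring
        linarith [hlen, h2k]
  -- integral of modulus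
  have hintmod : (∫ t in a..b, (|x' t - x' c| + |y' t - y' c|)) ≤ (b - a) * d := by
    have h1' : (∫ t in a..b, (|x' t - x' c| + |y' t - y' c|)) ≤ ∫ t in a..b, d := by
      apply intervalIntegral.integral_mono_on hab _ intervalIntegrable_const hptw
      exact (hixc.abs).add (hiyc.abs)
    simpa [intervalIntegral.integral_const, smul_eq_mul] using h1'
  -- decompose
  have hdx : x b - x a = x' c * (b - a) + ∫ t in a..b, (x' t - x' c) := by
    rw [my_ftc x x' hx hcx h0 hab h1]
    rw [intervalIntegral.integral_sub hix intervalIntegrable_const]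
    simp [intervalIntegral.integral_const, smul_eq_mul]
    ring
  have hdy : y b - y a = y' c * (b - a) + ∫ t in a..b, (y' t - y' c) := by
    rw [my_ftc y y' hy hcy h0 hab h1]
    rw [intervalIntegral.integral_sub hiy intervalIntegrable_const]
    simp [intervalIntegral.integral_const, smul_eq_mul]
    ring
  have habs : ∀ A I : ℝ, |A| - |I| ≤ |A + I| := by
    intro A I
    have h3 := abs_add_le (A + I) (-I)
    simp only [add_neg_cancel_right, abs_neg] at h3
    linarith
  have hax : |x' c| * (b-a) - |∫ t in a..b, (x' t - x' c)| ≤ |x b - x a| := by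
    rw [hdx]
    have h2 : |x' c * (b-a)| = |x' c| * (b-a) := by
      rw [abs_mul, abs_of_nonneg (by linarith : (0:ℝ) ≤ b - a)]
    have := habs (x' c * (b-a)) (∫ t in a..b, (x' t - x' c))
    linarith
  have hay : |y' c| * (b-a) - |∫ t in a..b, (y' t - y' c)| ≤ |y b - y a| := by
    rw [hdy]
    have h2 : |y' c * (b-a)| = |y' c| * (b-a) := by
      rw [abs_mul, abs_of_nonneg (by linarith : (0:ℝ) ≤ b - a)]
    have := habs (y' c * (b-a)) (∫ t in a..b, (y' t - y' c))
    linarith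
  have hintx : |∫ t in a..b, (x' t - x' c)| ≤ ∫ t in a..b, |x' t - x' c| := by
    simpa using intervalIntegral.norm_integral_le_integral_norm (f := fun t => x' t - x' c) (μ := volume) hab
  have hinty : |∫ t in a..b, (y' t - y' c)| ≤ ∫ t in a..b, |y' t - y' c| := by
    simpa using intervalIntegral.norm_integral_le_integral_norm (f := fun t => y' t - y' c) (μ := volume) hab
  have hsplit : (∫ t in a..b, |x' t - x' c|) + (∫ t in a..b, |y' t - y' c|)
      = ∫ t in a..b, (|x' t - x' c| + |y' t - y' c|) :=
    (intervalIntegral.integral_add hixc.abs hiyc.abs).symm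
  have hLc : |x' c| + |y' c| = L := hspeed c hcmem1
  nlinarith [hax, hay, hintx, hinty, hsplit, hintmod, hLc]
end chords


lemma pt_zero (k : ℕ) (u : Fin (k-1) → ℝ) : pt k u 0 = 0 := by simp [pt]

lemma pt_top (k : ℕ) (u : Fin (k-1) → ℝ) (hk : 1 ≤ k) : pt k u k = 1 := by
  rw [pt, dif_neg (by omega : ¬ k = 0), dif_neg (by omega : ¬ k ≤ k - 1)]

lemma pt_coord (k : ℕ) (u : Fin (k-1) → ℝ) (i : ℕ) (h1 : 1 ≤ i) (h2 : i ≤ k - 1) :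
    pt k u i = u ⟨i-1, by omega⟩ := by
  rw [pt, dif_neg (by omega : ¬ i = 0), dif_pos h2]

lemma pt_cont (k i : ℕ) : Continuous fun u : Fin (k-1) → ℝ => pt k u i := by
  unfold pt
  by_cases h0 : i = 0
  · simp [h0]; exact continuous_const
  · by_cases h : i ≤ k - 1
    · simp only [dif_neg h0, dif_pos h]
      exact continuous_apply _
    · simp only [dif_neg h0, dif_neg h]
      exact continuous_const

lemma pt_meas (k i : ℕ) : Measurable fun u : Fin (k-1) → ℝ => pt k u i :=
  (pt_cont k i).measurable

lemma pt_chain (k : ℕ) (u : Fin (k-1) → ℝ) (h : ∀ i < k, pt k u i < pt k u (i+1)) :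
    ∀ i j : ℕ, i < j → j ≤ k → pt k u i < pt k u j := by
  intro i j
  induction j with
  | zero => omega
  | succ j ih =>
    intro hij hjk
    rcases Nat.lt_or_ge i j with hij' | hij'
    · exact lt_trans (ih hij' (by omega)) (h j (by omega))
    · have : i = j := by omega
      subst this
      exact h i (by omega)

lemma pt_mem_Icc (k : ℕ) (u : Fin (k-1) → ℝ) (hk : 1 ≤ k)
    (h : ∀ i < k, pt k u i < pt k u (i+1)) (i : ℕ) (hik : i ≤ k) :
    pt k u i ∈ Icc (0:ℝ) 1 := by
  constructor
  · rcases Nat.eq_zero_or_pos i with h0 | h0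
    · subst h0; rw [pt_zero]
    · have := pt_chain k u h 0 i h0 hik
      rw [pt_zero] at this; linarith
  · rcases Nat.lt_or_ge i k with hik' | hik'
    · have := pt_chain k u h i k hik' le_rfl
      rw [pt_top k u hk] at this; linarith
    · have hik2 : i = k := by omega
      rw [hik2, pt_top k u hk]


set_option maxHeartbeats 1000000 in
lemma my_key_arith (k n : ℕ) (hk : 6 ≤ k) (L d e2 : ℝ) (hL : 0 < L) (hd0 : 0 ≤ d)
    (hd : d ≤ L/2) (he2 : d/L + 1/k ≤ e2) (hn : (k:ℝ)^2 * Real.log k ≤ n) :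
    ((L/k)^k * Real.exp (-(2*k)*e2))^n
      ≤ Real.exp (-(1/2 * n)) * (((L - d) * (1/k - 1/(2*(k:ℝ)^2)))^(k*n) * (1/(2*(k:ℝ)^2))^(k-1)) := by
  have hk0 : (0:ℝ) < k := by exact_mod_cast (by omega : 0 < k)
  have hk2 : (2:ℝ) ≤ k := by exact_mod_cast (by omega : 2 ≤ k)
  have hlk : 0 < Real.log k := Real.log_pos (by linarith)
  have hN0 : (0:ℝ) ≤ n := Nat.cast_nonneg n
  have hLd : 0 < L - d := by linarith
  have hq : (0:ℝ) < 1/k - 1/(2*(k:ℝ)^2) := by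
    rw [sub_pos, div_lt_div_iff₀ (by positivity) hk0]
    nlinarith
  have hC0 : 0 < (L - d) * (1/k - 1/(2*(k:ℝ)^2)) := mul_pos hLd hq
  have hA0 : 0 < (L/k)^k * Real.exp (-(2*k)*e2) := by positivity
  have hV0 : (0:ℝ) < (1/(2*(k:ℝ)^2)) := by positivity
  -- rewrite both sides as exponentials
  rw [← Real.exp_log (show (0:ℝ) < ((L/k)^k * Real.exp (-(2*k)*e2))^n by positivity),
    ← Real.exp_log (show (0:ℝ) <
      Real.exp (-(1/2 * n)) * (((L - d) * (1/k - 1/(2*(k:ℝ)^2)))^(k*n) * (1/(2*(k:ℝ)^2))^(k-1)) by positivity)]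
  apply Real.exp_le_exp.2
  rw [Real.log_pow, Real.log_mul (by positivity) (Real.exp_pos _).ne', Real.log_pow,
    Real.log_exp, Real.log_mul (Real.exp_pos _).ne' (by positivity),
    Real.log_mul (by positivity : (((L-d) * (1/k - 1/(2*(k:ℝ)^2)))^(k*n) : ℝ) ≠ 0) (by positivity),
    Real.log_pow, Real.log_pow, Real.log_exp,
    Real.log_div hL.ne' hk0.ne']
  -- expand log C
  have hlogC : Real.log ((L - d) * (1/k - 1/(2*(k:ℝ)^2)))
      = Real.log L + Real.log (1 - d/L) + (- Real.log k + Real.log (1 - 1/(2*k))) := by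
    have e1 : L - d = L * (1 - d/L) := by field_simp
    have e2' : 1/(k:ℝ) - 1/(2*(k:ℝ)^2) = (1/k) * (1 - 1/(2*k)) := by field_simp
    have h1 : (0:ℝ) < 1 - d/L := by
      rw [sub_pos, div_lt_one hL]; linarith
    have h2 : (0:ℝ) < 1 - 1/(2*(k:ℝ)) := by
      rw [sub_pos, div_lt_one (by positivity)]; linarith
    rw [e1, e2', Real.log_mul (mul_pos hL h1).ne' (by positivity),
      Real.log_mul hL.ne' h1.ne',
      Real.log_mul (by positivity : ((1:ℝ)/k) ≠ 0) h2.ne',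
      Real.log_div one_ne_zero hk0.ne', Real.log_one]
    ring
  rw [hlogC]
  have hlogV : Real.log (1/(2*(k:ℝ)^2)) = -(Real.log 2 + 2 * Real.log k) := by
    rw [Real.log_div one_ne_zero (by positivity), Real.log_one, Real.log_mul (by norm_num) (by positivity),
      Real.log_pow]
    push_cast; ring
  rw [hlogV]
  -- lower bounds on the logs
  have hb1 : -(2*(d/L)) ≤ Real.log (1 - d/L) := by
    apply my_log_one_sub_ge (by positivity)
    rw [div_le_iff₀ hL]; linarith
  have hb2 : -(2*(1/(2*(k:ℝ)))) ≤ Real.log (1 - 1/(2*k)) := by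
    apply my_log_one_sub_ge (by positivity)
    rw [div_le_div_iff₀ (by positivity) (by norm_num)]; linarith
  have hlog2 : Real.log 2 ≤ Real.log k := Real.log_le_log (by norm_num) hk2
  -- cast facts
  have hkm1 : ((k-1:ℕ):ℝ) = (k:ℝ) - 1 := by
    push_cast [Nat.cast_sub (by omega : 1 ≤ k)]; ring
  have hkn : ((k*n:ℕ):ℝ) = (k:ℝ) * n := by push_cast; ring
  rw [hkm1, hkn]
  -- final arithmetic
  have key1 : (k:ℝ)*(n:ℝ)*(-(2*(d/L))) ≤ (k:ℝ)*(n:ℝ)*Real.log (1 - d/L) :=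
    mul_le_mul_of_nonneg_left hb1 (by positivity)
  have key2 : (k:ℝ)*(n:ℝ)*(-(2*(1/(2*(k:ℝ))))) ≤ (k:ℝ)*(n:ℝ)*Real.log (1 - 1/(2*k)) :=
    mul_le_mul_of_nonneg_left hb2 (by positivity)
  have key2' : (k:ℝ)*(n:ℝ)*(-(2*(1/(2*(k:ℝ))))) = -(n:ℝ) := by field_simp
  have hl2pos : (0:ℝ) < Real.log 2 := Real.log_pos (by norm_num)
  have key3 : ((k:ℝ)-1) * (-(Real.log 2 + 2*Real.log k)) ≥ -(3*(k:ℝ)*Real.log k) := by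
    nlinarith [mul_le_mul_of_nonneg_left hlog2 hk0.le, hlk, hl2pos, hk2]
  have key4 : 2*(k:ℝ)*(n:ℝ)*e2 ≥ 2*(k:ℝ)*(n:ℝ)*(d/L) + 2*(n:ℝ) := by
    have := mul_le_mul_of_nonneg_left he2 (by positivity : (0:ℝ) ≤ 2*(k:ℝ)*(n:ℝ))
    have hid : 2*(k:ℝ)*(n:ℝ)*(d/L + 1/k) = 2*(k:ℝ)*(n:ℝ)*(d/L) + 2*(n:ℝ) := by
      field_simp
    linarith [hid ▸ this]
  have key5 : 3*(k:ℝ)*Real.log k ≤ (n:ℝ)/2 := by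
    have hkk : (0:ℝ) ≤ (k:ℝ)*Real.log k * ((k:ℝ) - 6) := by
      apply mul_nonneg (mul_nonneg hk0.le hlk.le)
      have : (6:ℝ) ≤ k := by exact_mod_cast hk
      linarith
    nlinarith [hn, hkk]
  linarith [key1, key2, key2', key3, key4, key5]

set_option maxHeartbeats 1000000 in
theorem stmt15 (x y x' y' : ℝ → ℝ) (L : ℝ) (hL : 0 < L)
    (hx : ∀ t ∈ Icc (0:ℝ) 1, HasDerivAt x (x' t) t)
    (hy : ∀ t ∈ Icc (0:ℝ) 1, HasDerivAt y (y' t) t)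
    (hcx : ContinuousOn x' (Icc 0 1)) (hcy : ContinuousOn y' (Icc 0 1))
    (hspeed : ∀ t ∈ Icc (0:ℝ) 1, |x' t| + |y' t| = L)
    (δ : ℕ → ℝ)
    (hmod : ∀ k : ℕ, 0 < k → ∀ s ∈ Icc (0:ℝ) 1, ∀ t ∈ Icc (0:ℝ) 1,
      |s - t| < 1 / k → |x' s - x' t| + |y' s - y' t| ≤ δ k)
    (hδ0 : Filter.Tendsto δ Filter.atTop (nhds 0)) :
    ∃ c : ℝ, 0 < c ∧ ∃ K : ℕ, ∀ k : ℕ, K ≤ k → ∀ n : ℕ, n = ⌈(k:ℝ)^2 * Real.log k⌉₊ →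
      (1 - Real.exp (-(c * n))) *
        (∫ u in {u : Fin (k-1) → ℝ | ∀ i < k, pt k u i < pt k u (i+1)},
          ∏ j ∈ Finset.range k,
            (|x (pt k u (j+1)) - x (pt k u j)| + |y (pt k u (j+1)) - y (pt k u j)|) ^ n)
      ≤ ∫ u in {u : Fin (k-1) → ℝ | (∀ i < k, pt k u i < pt k u (i+1)) ∧
            ∀ j : Fin (k-1), |u j - ((j:ℝ) + 1)/k| < Real.sqrt (δ k / L) + Real.sqrt (1/k)},
          ∏ j ∈ Finset.range k,
            (|x (pt k u (j+1)) - x (pt k u j)| + |y (pt k u (j+1)) - y (pt k u j)|) ^ n := by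
  -- eventually δ k < L/2
  have hhalf : (0:ℝ) < L/2 := by linarith
  have hev : ∀ᶠ k in Filter.atTop, δ k < L/2 := hδ0.eventually_lt_const hhalf
  obtain ⟨K0, hK0⟩ := Filter.eventually_atTop.1 hev
  refine ⟨1/2, by norm_num, max K0 6, ?_⟩
  intro k hk n hn
  have hk6 : 6 ≤ k := le_trans (le_max_right _ _) hk
  have hkK0 : K0 ≤ k := le_trans (le_max_left _ _) hk
  have hk1 : 1 ≤ k := by omega
  have hk0R : (0:ℝ) < k := by exact_mod_cast (by omega : 0 < k)
  have hd0 : 0 ≤ δ k := by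
    have h00 : (0:ℝ) ∈ Icc (0:ℝ) 1 := by constructor <;> norm_num
    have := hmod k (by omega) 0 h00 0 h00 (by simpa using by positivity : |(0:ℝ) - 0| < 1/k)
    simpa using this
  have hdL : δ k ≤ L/2 := (hK0 k hkK0).le
  have hlogk : 0 < Real.log k := Real.log_pos (by exact_mod_cast (by omega : 1 < k))
  have hnR : (k:ℝ)^2 * Real.log k ≤ (n:ℝ) := by rw [hn]; exact Nat.le_ceil _
  have hn1 : 1 ≤ n := by
    rw [hn]; exact Nat.one_le_iff_ne_zero.2 (by
      intro h
      have h2 := Nat.ceil_eq_zero.1 h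
      have h3 : 0 < (k:ℝ)^2 * Real.log k := mul_pos (pow_pos hk0R 2) hlogk
      linarith)
  -- abbreviations
  set ε : ℝ := Real.sqrt (δ k / L) + Real.sqrt (1/k) with hεdef
  have hε0 : 0 ≤ ε := by positivity
  have hε2 : δ k / L + 1/k ≤ ε^2 := by
    rw [hεdef, add_sq]
    have e1 : Real.sqrt (δ k / L)^2 = δ k / L := Real.sq_sqrt (by positivity)
    have e2 : Real.sqrt (1/(k:ℝ))^2 = 1/k := Real.sq_sqrt (by positivity)
    nlinarith [Real.sqrt_nonneg (δ k / L), Real.sqrt_nonneg (1/(k:ℝ))]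
  set f : (Fin (k-1) → ℝ) → ℝ := fun u => ∏ j ∈ Finset.range k,
    (|x (pt k u (j+1)) - x (pt k u j)| + |y (pt k u (j+1)) - y (pt k u j)|) ^ n with hfdef
  set Dset : Set (Fin (k-1) → ℝ) := {u | ∀ i < k, pt k u i < pt k u (i+1)} with hDdef
  set Tset : Set (Fin (k-1) → ℝ) := {u | ∀ j : Fin (k-1), |u j - ((j:ℝ) + 1)/k| < ε} with hTdef
  have hsetEq : {u : Fin (k-1) → ℝ | (∀ i < k, pt k u i < pt k u (i+1)) ∧
      ∀ j : Fin (k-1), |u j - ((j:ℝ) + 1)/k| < ε} = Dset ∩ Tset := rfl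
  have hf0 : ∀ u, 0 ≤ f u := by
    intro u
    apply Finset.prod_nonneg
    intro j _
    positivity
  -- measurability
  have hmeasD : MeasurableSet Dset := by
    have : Dset = ⋂ i, ⋂ (_ : i < k), {u : Fin (k-1) → ℝ | pt k u i < pt k u (i+1)} := by
      ext u; simp [hDdef]
    rw [this]
    exact MeasurableSet.iInter fun i => MeasurableSet.iInter fun _ =>
      measurableSet_lt (pt_meas k i) (pt_meas k (i+1))
  have hmeasT : MeasurableSet Tset := by
    have : Tset = ⋂ j : Fin (k-1), {u : Fin (k-1) → ℝ | |u j - ((j:ℝ) + 1)/k| < ε} := by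
      ext u; simp [hTdef]
    rw [this]
    exact MeasurableSet.iInter fun j => measurableSet_lt
      ((measurable_pi_apply j).sub measurable_const).abs measurable_const
  -- pt of coordinate
  have hptu : ∀ (u : Fin (k-1) → ℝ) (j : Fin (k-1)), pt k u ((j:ℕ)+1) = u j := by
    intro u j
    rw [pt_coord k u ((j:ℕ)+1) (by omega) (by omega : (j:ℕ)+1 ≤ k-1)]
    have heq : (⟨(j:ℕ)+1-1, by omega⟩ : Fin (k-1)) = j := Fin.ext (by simp)
    rw [heq]
  -- Dset ⊆ unit cube
  have hDsub : Dset ⊆ Icc (0 : Fin (k-1) → ℝ) 1 := by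
    intro u hu
    rw [Set.mem_Icc]
    constructor
    · rw [Pi.le_def]; intro j
      have h2 := pt_mem_Icc k u hk1 hu ((j:ℕ)+1) (by omega)
      rw [hptu u j] at h2
      exact h2.1
    · rw [Pi.le_def]; intro j
      have h2 := pt_mem_Icc k u hk1 hu ((j:ℕ)+1) (by omega)
      rw [hptu u j] at h2
      exact h2.2
  -- continuity of f on the unit cube
  have hcube : IsCompact (Icc (0 : Fin (k-1) → ℝ) 1) := isCompact_Icc
  have hptmaps : ∀ i ≤ k, ∀ u ∈ Icc (0 : Fin (k-1) → ℝ) 1, pt k u i ∈ Icc (0:ℝ) 1 := by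
    intro i hik u hu
    rw [Set.mem_Icc] at hu
    unfold pt
    by_cases h0 : i = 0
    · simp [h0]
    · by_cases hh : i ≤ k - 1
      · simp only [dif_neg h0, dif_pos hh]
        exact ⟨hu.1 _, hu.2 _⟩
      · simp only [dif_neg h0, dif_neg hh]
        norm_num
  have hxc : ContinuousOn x (Icc (0:ℝ) 1) := fun t ht => (hx t ht).continuousAt.continuousWithinAt
  have hyc : ContinuousOn y (Icc (0:ℝ) 1) := fun t ht => (hy t ht).continuousAt.continuousWithinAt
  have hfcont : ContinuousOn f (Icc (0 : Fin (k-1) → ℝ) 1) := by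
    rw [hfdef]
    apply continuousOn_finset_prod
    intro j hj
    have hj' : j < k := Finset.mem_range.1 hj
    have hX : ∀ i ≤ k, ContinuousOn (fun u : Fin (k-1) → ℝ => x (pt k u i))
        (Icc (0 : Fin (k-1) → ℝ) 1) := by
      intro i hik
      exact hxc.comp (pt_cont k i).continuousOn (fun u hu => hptmaps i hik u hu)
    have hY : ∀ i ≤ k, ContinuousOn (fun u : Fin (k-1) → ℝ => y (pt k u i))
        (Icc (0 : Fin (k-1) → ℝ) 1) := by
      intro i hik
      exact hyc.comp (pt_cont k i).continuousOn (fun u hu => hptmaps i hik u hu)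
    exact (((((hX (j+1) (by omega)).sub (hX j (by omega))).abs).add
      (((hY (j+1) (by omega)).sub (hY j (by omega))).abs)).pow n)
  have hfint : IntegrableOn f (Icc (0 : Fin (k-1) → ℝ) 1) volume :=
    hfcont.integrableOn_compact hcube
  have hfintD : IntegrableOn f Dset volume := hfint.mono_set hDsub
  -- cube has volume 1
  have hcubevol : volume (Icc (0 : Fin (k-1) → ℝ) 1) = 1 := by
    rw [← pi_univ_Icc, volume_pi_pi]
    simp [Real.volume_Icc]
  -- the bad-set pointwise bound
  set Mb1 : ℝ := (L/(k:ℝ))^k * Real.exp (-(2*(k:ℝ))*ε^2) with hMbdef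
  have hMb1pos : 0 < Mb1 := by positivity
  have hbadptw : ∀ u ∈ Dset \ Tset, f u ≤ Mb1^n := by
    intro u hu
    obtain ⟨huD, huT⟩ := hu
    have huD' : ∀ i < k, pt k u i < pt k u (i+1) := huD
    simp only [hTdef, Set.mem_setOf_eq, not_forall, not_lt] at huT
    obtain ⟨j0, hj0⟩ := huT
    set a : ℕ := (j0:ℕ)+1 with hadef
    have ha1 : 1 ≤ a := by omega
    have hak : a < k := by have := j0.isLt; omega
    set t : ℝ := pt k u a with htdef
    have htu : t = u j0 := hptu u j0
    have ht : t ∈ Set.Ioo (0:ℝ) 1 := by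
      constructor
      · have := pt_chain k u huD' 0 a (by omega) (by omega)
        rw [pt_zero] at this; exact this
      · have := pt_chain k u huD' a k hak le_rfl
        rw [pt_top k u hk1] at this; exact this
    set g : ℕ → ℝ := fun i => pt k u (i+1) - pt k u i with hgdef
    have hg0 : ∀ i < k, 0 ≤ g i := fun i hi => le_of_lt (sub_pos.2 (huD' i hi))
    have hch : ∀ i ∈ Finset.range k,
        |x (pt k u (i+1)) - x (pt k u i)| + |y (pt k u (i+1)) - y (pt k u i)| ≤ L * g i := by
      intro i hi
      have hi' : i < k := Finset.mem_range.1 hi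
      exact my_chord_upper x y x' y' L hx hy hcx hcy hspeed
        (pt_mem_Icc k u hk1 huD' i (by omega)).1 (le_of_lt (huD' i hi'))
        (pt_mem_Icc k u hk1 huD' (i+1) (by omega)).2
    have step1 : f u ≤ ∏ i ∈ Finset.range k, (L * g i)^n := by
      rw [hfdef]
      apply Finset.prod_le_prod
      · intro i _; positivity
      · intro i hi
        exact pow_le_pow_left₀ (by positivity) (hch i hi) n
    have step2 : ∏ i ∈ Finset.range k, (L * g i)^n = (L^k * ∏ i ∈ Finset.range k, g i)^n := by
      rw [Finset.prod_pow, Finset.prod_mul_distrib, Finset.prod_const, Finset.card_range]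
    -- sums of gaps
    have hsum1 : ∑ i ∈ Finset.range a, g i = t := by
      rw [hgdef]
      rw [Finset.sum_range_sub (fun i => pt k u i) a, pt_zero, sub_zero, htdef]
    have hsumk : ∑ i ∈ Finset.range k, g i = 1 := by
      rw [hgdef]
      rw [Finset.sum_range_sub (fun i => pt k u i) k, pt_zero, sub_zero, pt_top k u hk1]
    have hsum2 : ∑ i ∈ Finset.Ico a k, g i = 1 - t := by
      rw [Finset.sum_Ico_eq_sub _ hak.le, hsum1, hsumk]
    have hprodsplit : ∏ i ∈ Finset.range k, g i
        = (∏ i ∈ Finset.range a, g i) * (∏ i ∈ Finset.Ico a k, g i) := by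
      rw [Finset.range_eq_Ico, ← Finset.prod_Ico_consecutive _ (Nat.zero_le a) hak.le,
        ← Finset.range_eq_Ico]
    have hp1 : ∏ i ∈ Finset.range a, g i ≤ (t/a)^a := by
      have := my_amgm (Finset.range a) g
        (fun i hi => hg0 i (by have := Finset.mem_range.1 hi; omega))
        (Finset.nonempty_range_iff.2 (by omega))
      rwa [hsum1, Finset.card_range] at this
    have hp2 : ∏ i ∈ Finset.Ico a k, g i ≤ ((1-t)/((k-a:ℕ):ℝ))^(k-a) := by
      have := my_amgm (Finset.Ico a k) g
        (fun i hi => hg0 i (Finset.mem_Ico.1 hi).2)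
        (Finset.nonempty_Ico.2 hak)
      rwa [hsum2, Nat.card_Ico] at this
    have hprodbound : ∏ i ∈ Finset.range k, g i
        ≤ (t/a)^a * ((1-t)/((k-a:ℕ):ℝ))^(k-a) := by
      rw [hprodsplit]
      apply mul_le_mul hp1 hp2 (Finset.prod_nonneg (fun i hi => hg0 i (Finset.mem_Ico.1 hi).2))
      exact pow_nonneg (div_nonneg ht.1.le (by positivity)) a
    have hent := my_entropy k a ha1 hak ht
    have hdev : ε^2 ≤ (t - a/k)^2 := by
      have hcast : ((a:ℕ):ℝ) = (j0:ℝ)+1 := by push_cast [hadef]; ring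
      have habs : ε ≤ |t - (a:ℝ)/k| := by
        rw [hcast, htu]; exact hj0
      calc ε^2 ≤ |t - (a:ℝ)/k|^2 := pow_le_pow_left₀ hε0 habs 2
        _ = (t - (a:ℝ)/k)^2 := sq_abs _
    have hexp : Real.exp (-(2*(k:ℝ))*(t - a/k)^2) ≤ Real.exp (-(2*(k:ℝ))*ε^2) := by
      apply Real.exp_le_exp.2
      nlinarith [hdev, hk0R]
    have hprodfinal : ∏ i ∈ Finset.range k, g i ≤ ((1:ℝ)/k)^k * Real.exp (-(2*(k:ℝ))*ε^2) := by
      calc ∏ i ∈ Finset.range k, g i ≤ (t/a)^a * ((1-t)/((k-a:ℕ):ℝ))^(k-a) := hprodbound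
        _ ≤ ((1:ℝ)/k)^k * Real.exp (-(2*(k:ℝ))*(t - a/k)^2) := hent
        _ ≤ ((1:ℝ)/k)^k * Real.exp (-(2*(k:ℝ))*ε^2) := by
            apply mul_le_mul_of_nonneg_left hexp (by positivity)
    have hMb1eq : Mb1 = L^k * (((1:ℝ)/k)^k * Real.exp (-(2*(k:ℝ))*ε^2)) := by
      rw [hMbdef, div_pow, div_pow, one_pow]
      field_simp
    calc f u ≤ ∏ i ∈ Finset.range k, (L * g i)^n := step1
      _ = (L^k * ∏ i ∈ Finset.range k, g i)^n := step2
      _ ≤ Mb1^n := by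
          rw [hMb1eq]
          apply pow_le_pow_left₀
          · apply mul_nonneg (by positivity)
            exact Finset.prod_nonneg (fun i hi => hg0 i (Finset.mem_range.1 hi))
          · exact mul_le_mul_of_nonneg_left hprodfinal (by positivity)
  -- bad integral bound
  have hDTsub : Dset \ Tset ⊆ Icc (0 : Fin (k-1) → ℝ) 1 := (diff_subset).trans hDsub
  have hμDT : volume (Dset \ Tset) ≤ 1 := by
    rw [← hcubevol]; exact measure_mono hDTsub
  have hμDTne : volume (Dset \ Tset) ≠ ⊤ := by
    intro h; rw [h] at hμDT; exact (by norm_num : ¬ (⊤ : ENNReal) ≤ 1) hμDT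
  have hbadint : ∫ u in Dset \ Tset, f u ≤ Mb1^n := by
    have h1 : ∫ u in Dset \ Tset, f u ≤ ∫ _u in Dset \ Tset, Mb1^n := by
      apply setIntegral_mono_on (hfintD.mono_set diff_subset)
        (integrableOn_const hμDTne)
        (hmeasD.diff hmeasT) hbadptw
    have h2 : ∫ _u in Dset \ Tset, (Mb1^n : ℝ) = (volume (Dset \ Tset)).toReal * Mb1^n := by
      rw [setIntegral_const, smul_eq_mul]; rfl
    have h3 : (volume (Dset \ Tset)).toReal ≤ 1 := by
      have := ENNReal.toReal_mono (by norm_num : (1:ENNReal) ≠ ⊤) hμDT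
      simpa using this
    calc ∫ u in Dset \ Tset, f u ≤ (volume (Dset \ Tset)).toReal * Mb1^n := by rw [← h2]; exact h1
      _ ≤ 1 * Mb1^n := mul_le_mul_of_nonneg_right h3 (by positivity)
      _ = Mb1^n := one_mul _
  -- the good box
  set r : ℝ := 1/(4*(k:ℝ)^2) with hrdef
  have hr0 : 0 < r := by positivity
  have h2r : 2*r = 1/(2*(k:ℝ)^2) := by rw [hrdef]; ring
  set B : Set (Fin (k-1) → ℝ) := Set.pi univ
    (fun j => Ioo ((((j:ℕ):ℝ)+1)/k - r) ((((j:ℕ):ℝ)+1)/k + r)) with hBdef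
  have hBmem : ∀ u : Fin (k-1) → ℝ, u ∈ B ↔
      ∀ j : Fin (k-1), u j ∈ Ioo ((((j:ℕ):ℝ)+1)/k - r) ((((j:ℕ):ℝ)+1)/k + r) := by
    intro u; rw [hBdef, Set.mem_univ_pi]
  have hptclose : ∀ u ∈ B, ∀ i ≤ k, |pt k u i - i/k| ≤ r := by
    intro u hu i hik
    rcases Nat.eq_zero_or_pos i with h0 | h0
    · subst h0; rw [pt_zero]; simp [hr0.le]
    · rcases Nat.lt_or_ge i k with hik' | hik'
      · have hik1 : i ≤ k - 1 := by omega
        rw [pt_coord k u i h0 hik1]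
        have hj := (hBmem u).1 hu ⟨i-1, by omega⟩
        have hc : (((⟨i-1, by omega⟩ : Fin (k-1)):ℕ):ℝ) + 1 = (i:ℝ) := by
          simp only []
          push_cast [Nat.cast_sub h0]
          ring
        rw [hc] at hj
        obtain ⟨hj1, hj2⟩ := hj
        rw [abs_le]; constructor <;> linarith
      · have hik2 : i = k := by omega
        rw [hik2, pt_top k u hk1]
        have hkk : (k:ℝ)/k = 1 := div_self hk0R.ne'
        rw [hkk]; simp [hr0.le]
  have hgapB : ∀ u ∈ B, ∀ i < k,
      1/(k:ℝ) - 2*r ≤ pt k u (i+1) - pt k u i ∧ pt k u (i+1) - pt k u i ≤ 1/(k:ℝ) + 2*r := by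
    intro u hu i hik
    have h1 := hptclose u hu i (by omega)
    have h2 := hptclose u hu (i+1) (by omega)
    rw [abs_le] at h1 h2
    have hc : ((i+1:ℕ):ℝ)/k = (i:ℝ)/k + 1/k := by push_cast; field_simp
    rw [hc] at h2
    constructor <;> [linarith [h1.1, h1.2, h2.1, h2.2]; linarith [h1.1, h1.2, h2.1, h2.2]]
  have hk1R : (1:ℝ) ≤ k := by exact_mod_cast hk1
  have hgapBpos : 0 < 1/(k:ℝ) - 2*r := by
    rw [h2r, sub_pos, div_lt_div_iff₀ (by positivity) hk0R]
    nlinarith [hk0R, hk1R]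
  have hBD : B ⊆ Dset := by
    intro u hu
    intro i hik
    have := (hgapB u hu i hik).1
    linarith [hgapBpos]
  -- chord lower bound on the box
  set mg : ℝ := (L - δ k) * (1/(k:ℝ) - 1/(2*(k:ℝ)^2)) with hmgdef
  have hLd : 0 < L - δ k := by linarith
  have hmg0 : 0 < mg := by
    apply mul_pos hLd
    rw [← h2r]; exact hgapBpos
  have hgoodptw : ∀ u ∈ B, mg^(k*n) ≤ f u := by
    intro u hu
    have huD : ∀ i < k, pt k u i < pt k u (i+1) := hBD hu
    have hch : ∀ i ∈ Finset.range k, mg ≤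
        |x (pt k u (i+1)) - x (pt k u i)| + |y (pt k u (i+1)) - y (pt k u i)| := by
      intro i hi
      have hi' : i < k := Finset.mem_range.1 hi
      have hgap := hgapB u hu i hi'
      have hlow := my_chord_lower x y x' y' L hx hy hcx hcy hspeed k (by omega) (δ k)
        (hmod k (by omega))
        (pt_mem_Icc k u hk1 huD i (by omega)).1 (le_of_lt (huD i hi'))
        (pt_mem_Icc k u hk1 huD (i+1) (by omega)).2
        (by
          have h2k : 1/(k:ℝ) + 2*r < 2/k := by
            rw [h2r]
            rw [div_add_div _ _ (ne_of_gt hk0R) (by positivity), div_lt_div_iff₀ (by positivity) (by positivity)]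
            ring_nf
            nlinarith [hk0R, hk1R, mul_pos (mul_pos hk0R hk0R) (show (0:ℝ) < 2*(k:ℝ)-1 by linarith)]
          linarith [hgap.2])
      calc mg = (L - δ k) * (1/(k:ℝ) - 2*r) := by rw [hmgdef, h2r]
        _ ≤ (L - δ k) * (pt k u (i+1) - pt k u i) :=
            mul_le_mul_of_nonneg_left hgap.1 hLd.le
        _ ≤ _ := hlow
    rw [hfdef]
    calc mg^(k*n) = ∏ _i ∈ Finset.range k, mg^n := by
          rw [Finset.prod_const, Finset.card_range, ← pow_mul, mul_comm n k]
      _ ≤ _ := by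
          apply Finset.prod_le_prod (fun i _ => by positivity)
          intro i hi
          exact pow_le_pow_left₀ hmg0.le (hch i hi) n
  -- volume of the box
  have hBmeas : MeasurableSet B := by
    rw [hBdef]
    exact MeasurableSet.univ_pi (fun j => measurableSet_Ioo)
  have hμB : volume B = ENNReal.ofReal (2*r) ^ (k-1) := by
    rw [hBdef, volume_pi_pi]
    have : ∀ j : Fin (k-1),
        volume (Ioo ((((j:ℕ):ℝ)+1)/k - r) ((((j:ℕ):ℝ)+1)/k + r)) = ENNReal.ofReal (2*r) := by
      intro j
      rw [Real.volume_Ioo]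
      congr 1
      ring
    simp_rw [this]
    rw [Finset.prod_const, Finset.card_univ, Fintype.card_fin]
  have hμBne : volume B ≠ ⊤ := by
    rw [hμB]
    exact ENNReal.pow_ne_top ENNReal.ofReal_ne_top
  have hμBtoReal : (volume B).toReal = (2*r)^(k-1) := by
    rw [hμB, ENNReal.toReal_pow, ENNReal.toReal_ofReal (by positivity)]
  have hgoodint : mg^(k*n) * (2*r)^(k-1) ≤ ∫ u in B, f u := by
    rw [← hμBtoReal]
    have := setIntegral_ge_of_const_le_real hBmeas hμBne hgoodptw
      (hfint.mono_set (hBD.trans hDsub))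
    exact this
  have hBintle : ∫ u in B, f u ≤ ∫ u in Dset, f u := by
    apply setIntegral_mono_set hfintD (ae_of_all _ hf0)
    exact HasSubset.Subset.eventuallyLE hBD
  -- key arithmetic
  have harith := my_key_arith k n hk6 L (δ k) (ε^2) hL hd0 hdL hε2 hnR
  have h2rpow : ((1:ℝ)/(2*(k:ℝ)^2))^(k-1) = (2*r)^(k-1) := by rw [h2r]
  rw [h2rpow] at harith
  -- assemble
  have hsplit := integral_inter_add_diff hmeasT hfintD
  have hDnonneg : 0 ≤ ∫ u in Dset, f u := setIntegral_nonneg hmeasD (fun u _ => hf0 u)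
  have hE : (0:ℝ) < Real.exp (-(1/2 * (n:ℝ))) := Real.exp_pos _
  have hchain : ∫ u in Dset \ Tset, f u ≤ Real.exp (-(1/2 * (n:ℝ))) * ∫ u in Dset, f u := by
    calc ∫ u in Dset \ Tset, f u ≤ Mb1^n := hbadint
      _ ≤ Real.exp (-(1/2 * (n:ℝ))) * (mg^(k*n) * (2*r)^(k-1)) := harith
      _ ≤ Real.exp (-(1/2 * (n:ℝ))) * ∫ u in B, f u :=
          mul_le_mul_of_nonneg_left hgoodint hE.le
      _ ≤ Real.exp (-(1/2 * (n:ℝ))) * ∫ u in Dset, f u :=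
          mul_le_mul_of_nonneg_left hBintle hE.le
  rw [hsetEq]
  have hexpand : (1 - Real.exp (-(1/2 * (n:ℝ)))) * ∫ u in Dset, f u
      = (∫ u in Dset, f u) - Real.exp (-(1/2 * (n:ℝ))) * ∫ u in Dset, f u := by ring
  rw [hexpand]
  linarith [hsplit, hchain]
end chords
end
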